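/- arXiv:2307.04434 — 2 statements merged into one kernel-verified Lean document; each statement's English description precedes it below -/
import Mathlib

section
/- For $d > 6$, there exists a constant $C = C(d) > 0$ such that for all $x, y \in \mathbb{Z}^d$, $\sum_{z_1, z_2 \in \mathbb{Z}^d} |x-z_1|^{2-d} |z_1-z_2|^{2-d} |z_2-x|^{2-d} |z_1-y|^{2-d} \leq C |x-y|^{2-d}$. -/
/-- The ℓ∞ norm of a lattice point, as a real number. -/
noncomputable def normInf {d : ℕ} (x : Fin d → ℤ) : ℝ :=
  ((Finset.univ.sup fun i => (x i).natAbs : ℕ) : ℝ)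

/-- `ipow x a = |x|^{-a}` with the convention `0^{-a} = 1`. -/
noncomputable def ipow {d : ℕ} (x : Fin d → ℤ) (a : ℝ) : ℝ :=
  if x = 0 then 1 else normInf x ^ (-a)

namespace DCAux

/-- `Mn w = max 1 ‖w‖_∞`, as a natural number. -/
def Mn {d : ℕ} (w : Fin d → ℤ) : ℕ := max 1 (Finset.univ.sup fun i => (w i).natAbs)

/-- `F a w = (Mn w) ^ (-a)`. -/
noncomputable def F {d : ℕ} (a : ℕ) (w : Fin d → ℤ) : ℝ := ((Mn w : ℝ) ^ a)⁻¹

lemma one_le_Mn {d : ℕ} (w : Fin d → ℤ) : 1 ≤ Mn w := le_max_left _ _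

lemma Mn_pos_real {d : ℕ} (w : Fin d → ℤ) : (0 : ℝ) < (Mn w : ℝ) := by
  exact_mod_cast Nat.lt_of_lt_of_le Nat.zero_lt_one (one_le_Mn w)

lemma F_nonneg {d : ℕ} (a : ℕ) (w : Fin d → ℤ) : 0 ≤ F a w := by
  unfold F; positivity

lemma Mn_neg {d : ℕ} (w : Fin d → ℤ) : Mn (-w) = Mn w := by
  unfold Mn
  congr 1
  apply Finset.sup_congr rfl
  intro i _
  simp

lemma Mn_sub_comm {d : ℕ} (u v : Fin d → ℤ) : Mn (u - v) = Mn (v - u) := by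
  rw [← Mn_neg (v - u), neg_sub]

lemma sup_le_Mn {d : ℕ} (w : Fin d → ℤ) (i : Fin d) : (w i).natAbs ≤ Mn w := by
  unfold Mn
  exact le_trans (Finset.le_sup (f := fun i => (w i).natAbs) (Finset.mem_univ i))
    (le_max_right _ _)

lemma Mn_add {d : ℕ} (u v : Fin d → ℤ) : Mn (u + v) ≤ Mn u + Mn v := by
  have h : ∀ i : Fin d, ((u + v) i).natAbs ≤ Mn u + Mn v := by
    intro i
    have h1 : ((u + v) i).natAbs ≤ (u i).natAbs + (v i).natAbs := by
      simp only [Pi.add_apply]; exact Int.natAbs_add_le _ _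
    exact le_trans h1 (Nat.add_le_add (sup_le_Mn u i) (sup_le_Mn v i))
  have h2 : (1 : ℕ) ≤ Mn u + Mn v := le_trans (one_le_Mn u) (Nat.le_add_right _ _)
  exact max_le h2 (Finset.sup_le fun i _ => h i)

lemma Mn_triangle {d : ℕ} (x y z : Fin d → ℤ) : Mn (x - y) ≤ Mn (z - x) + Mn (z - y) := by
  have h : x - y = (z - y) + -(z - x) := by ring
  rw [h]
  calc Mn ((z - y) + -(z - x)) ≤ Mn (z - y) + Mn (-(z - x)) := Mn_add _ _
    _ = Mn (z - y) + Mn (z - x) := by rw [Mn_neg]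
    _ = Mn (z - x) + Mn (z - y) := by ring

lemma F_mul {d : ℕ} (a b : ℕ) (w : Fin d → ℤ) : F a w * F b w = F (a + b) w := by
  unfold F; rw [pow_add, mul_inv]

lemma F_anti {d : ℕ} (a : ℕ) {v w : Fin d → ℤ} (h : Mn v ≤ Mn w) : F a w ≤ F a v := by
  unfold F
  apply inv_anti₀ (pow_pos (Mn_pos_real v) a)
  exact pow_le_pow_left₀ (by positivity) (by exact_mod_cast h) a

/-- If `r ≤ 2 s` then `(s:ℝ)^(-e) ≤ 2^e r^(-e)`. -/
lemma inv_pow_le {r s : ℕ} (e : ℕ) (hr : 1 ≤ r) (h : r ≤ 2 * s) :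
    ((s : ℝ) ^ e)⁻¹ ≤ 2 ^ e * ((r : ℝ) ^ e)⁻¹ := by
  have hs : (0 : ℝ) < (s : ℝ) := by
    have h1 : 1 ≤ s := by omega
    exact_mod_cast Nat.lt_of_lt_of_le Nat.zero_lt_one h1
  have hrR : (0 : ℝ) < (r : ℝ) := by
    exact_mod_cast Nat.lt_of_lt_of_le Nat.zero_lt_one hr
  have h1 : (r : ℝ) ^ e ≤ 2 ^ e * (s : ℝ) ^ e := by
    rw [← mul_pow]
    apply pow_le_pow_left₀ (by positivity)
    exact_mod_cast h
  rw [← div_eq_mul_inv, le_div_iff₀ (by positivity)]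
  calc ((s : ℝ) ^ e)⁻¹ * (r : ℝ) ^ e ≤ ((s : ℝ) ^ e)⁻¹ * (2 ^ e * (s : ℝ) ^ e) := by
        apply mul_le_mul_of_nonneg_left h1 (by positivity)
    _ = 2 ^ e := by field_simp

lemma F_le_inv {d : ℕ} {r : ℕ} (e : ℕ) {w : Fin d → ℤ} (hr : 1 ≤ r) (h : r ≤ 2 * Mn w) :
    F e w ≤ 2 ^ e * ((r : ℝ) ^ e)⁻¹ :=
  inv_pow_le e hr h

/-! ### One-dimensional sums -/

lemma aux_inv_sq (m : ℝ) (hm : 1 ≤ m) : (m ^ 2)⁻¹ ≤ 2 * m⁻¹ - 2 * (m + 1)⁻¹ := by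
  have h0 : (0 : ℝ) < m := by linarith
  have h1 : (0 : ℝ) < m + 1 := by linarith
  have key : 2 * m⁻¹ - 2 * (m + 1)⁻¹ - (m ^ 2)⁻¹ = (m - 1) / (m ^ 2 * (m + 1)) := by
    field_simp
    ring
  have h2 : 0 ≤ (m - 1) / (m ^ 2 * (m + 1)) :=
    div_nonneg (by linarith) (by positivity)
  linarith

lemma sum_inv_sq_aux (R : ℕ) (hR : 1 ≤ R) (k : ℕ) :
    ∑ n ∈ Finset.Icc R (R - 1 + k), ((n : ℝ) ^ 2)⁻¹ ≤
      2 * (R : ℝ)⁻¹ - 2 * ((R : ℝ) + k)⁻¹ := by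
  induction k with
  | zero =>
    rw [Finset.Icc_eq_empty (by omega)]
    simp
  | succ k ih =>
    have hle : R ≤ R - 1 + k + 1 := by omega
    have hstep : R - 1 + (k + 1) = (R - 1 + k) + 1 := by omega
    rw [hstep, Finset.sum_Icc_succ_top hle]
    have hcast : ((R - 1 + k + 1 : ℕ) : ℝ) = (R : ℝ) + k := by
      push_cast [Nat.cast_sub hR]
      ring
    have hm : (1 : ℝ) ≤ (R : ℝ) + k := by
      have ha : (1 : ℝ) ≤ (R : ℝ) := by exact_mod_cast hR
      have hb : (0 : ℝ) ≤ (k : ℝ) := by positivity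
      linarith
    have haux := aux_inv_sq ((R : ℝ) + k) hm
    rw [hcast]
    have hgoal : ((k + 1 : ℕ) : ℝ) = (k : ℝ) + 1 := by push_cast; ring
    rw [hgoal, show (R : ℝ) + ((k : ℝ) + 1) = ((R : ℝ) + k) + 1 by ring]
    linarith

lemma sum_inv_sq (R N : ℕ) (hR : 1 ≤ R) :
    ∑ n ∈ Finset.Icc R N, ((n : ℝ) ^ 2)⁻¹ ≤ 2 * (R : ℝ)⁻¹ := by
  rcases le_or_gt R N with h | h
  · have h2 := sum_inv_sq_aux R hR (N - R + 1)
    have h3 : R - 1 + (N - R + 1) = N := by omega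
    rw [h3] at h2
    have h5 : 0 ≤ 2 * ((R : ℝ) + ((N - R + 1 : ℕ) : ℝ))⁻¹ := by positivity
    linarith
  · rw [Finset.Icc_eq_empty (by omega)]
    simp

lemma sum_inv_pow (q R N : ℕ) (hq : 2 ≤ q) (hR : 1 ≤ R) :
    ∑ n ∈ Finset.Icc R N, ((n : ℝ) ^ q)⁻¹ ≤ 2 * ((R : ℝ) ^ (q - 1))⁻¹ := by
  have hRpos : (0 : ℝ) < (R : ℝ) := by
    exact_mod_cast Nat.lt_of_lt_of_le Nat.zero_lt_one hR
  have step : ∀ n ∈ Finset.Icc R N, ((n : ℝ) ^ q)⁻¹ ≤ ((R : ℝ) ^ (q - 2))⁻¹ * ((n : ℝ) ^ 2)⁻¹ := by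
    intro n hn
    rw [Finset.mem_Icc] at hn
    have hnR : (R : ℝ) ≤ (n : ℝ) := by exact_mod_cast hn.1
    have hnpos : (0 : ℝ) < (n : ℝ) := by linarith
    rw [← mul_inv]
    apply inv_anti₀ (by positivity)
    calc (R : ℝ) ^ (q - 2) * (n : ℝ) ^ 2 ≤ (n : ℝ) ^ (q - 2) * (n : ℝ) ^ 2 := by
          apply mul_le_mul_of_nonneg_right (pow_le_pow_left₀ (by positivity) hnR _) (by positivity)
      _ = (n : ℝ) ^ q := by rw [← pow_add]; congr 1; omega
  calc ∑ n ∈ Finset.Icc R N, ((n : ℝ) ^ q)⁻¹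
      ≤ ∑ n ∈ Finset.Icc R N, ((R : ℝ) ^ (q - 2))⁻¹ * ((n : ℝ) ^ 2)⁻¹ := Finset.sum_le_sum step
    _ = ((R : ℝ) ^ (q - 2))⁻¹ * ∑ n ∈ Finset.Icc R N, ((n : ℝ) ^ 2)⁻¹ := by
        rw [Finset.mul_sum]
    _ ≤ ((R : ℝ) ^ (q - 2))⁻¹ * (2 * (R : ℝ)⁻¹) := by
        apply mul_le_mul_of_nonneg_left (sum_inv_sq R N hR) (by positivity)
    _ = 2 * ((R : ℝ) ^ (q - 1))⁻¹ := by
        have h : (R : ℝ) ^ (q - 1) = (R : ℝ) ^ (q - 2) * (R : ℝ) := by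
          rw [← pow_succ]; congr 1; omega
        rw [h, mul_inv]
        ring

/-! ### Counting -/

/-- The box `[-N, N]^d`. -/
noncomputable def box (d N : ℕ) : Finset (Fin d → ℤ) := Fintype.piFinset fun _ => Finset.Icc (-(N : ℤ)) N

lemma mem_box {d N : ℕ} {w : Fin d → ℤ} : w ∈ box d N ↔ ∀ i, (w i).natAbs ≤ N := by
  simp only [box, Fintype.mem_piFinset, Finset.mem_Icc]
  constructor <;> intro h i <;> have := h i <;> omega

lemma card_box (d N : ℕ) : (box d N).card = (2 * N + 1) ^ d := by
  rw [box, Fintype.card_piFinset]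
  have h : (Finset.Icc (-(N : ℤ)) N).card = 2 * N + 1 := by
    rw [Int.card_Icc]
    omega
  simp [h]

lemma box_mono {d N M : ℕ} (h : N ≤ M) : box d N ⊆ box d M := by
  intro w hw
  rw [mem_box] at *
  intro i
  exact le_trans (hw i) h

lemma Mn_le_iff {d N : ℕ} (hN : 1 ≤ N) {w : Fin d → ℤ} : Mn w ≤ N ↔ w ∈ box d N := by
  rw [mem_box]
  constructor
  · intro h i
    exact le_trans (sup_le_Mn w i) h
  · intro h
    exact max_le hN (Finset.sup_le fun i _ => h i)

lemma pow_sub_pow_le (x y : ℝ) (hy : 0 ≤ y) (hxy : y ≤ x) :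
    ∀ k : ℕ, x ^ k - y ^ k ≤ k * (x - y) * x ^ (k - 1)
  | 0 => by simp
  | 1 => by simp
  | (k + 2) => by
    have ih := pow_sub_pow_le x y hy hxy (k + 1)
    have hx : 0 ≤ x := le_trans hy hxy
    have hyx : y ^ (k + 1) ≤ x ^ (k + 1) := pow_le_pow_left₀ hy hxy _
    have h2 : (k + 1 : ℕ) - 1 = k := by omega
    rw [h2] at ih
    push_cast at ih
    have h3 : (k + 2 : ℕ) - 1 = k + 1 := by omega
    rw [h3]
    have h4 := mul_le_mul_of_nonneg_left ih hx
    have h5 := mul_le_mul_of_nonneg_left hyx (sub_nonneg.2 hxy)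
    push_cast
    have e1 : x ^ (k + 2) - y ^ (k + 2) = x * (x ^ (k + 1) - y ^ (k + 1)) + (x - y) * y ^ (k + 1) := by
      ring
    have e2 : x * (((k : ℝ) + 1) * (x - y) * x ^ k) = ((k : ℝ) + 1) * (x - y) * x ^ (k + 1) := by
      ring
    have e3 : ((k : ℝ) + 2) * (x - y) * x ^ (k + 1) =
        ((k : ℝ) + 1) * (x - y) * x ^ (k + 1) + (x - y) * x ^ (k + 1) := by ring
    linarith

/-- The constant in the shell-counting bound. -/
noncomputable def K1 (d : ℕ) : ℝ := 2 * d * 3 ^ (d - 1)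

lemma K1_pos {d : ℕ} (hd : 2 ≤ d) : 0 < K1 d := by
  unfold K1
  have h : (0 : ℝ) < (d : ℝ) := by
    exact_mod_cast Nat.lt_of_lt_of_le Nat.zero_lt_one (by omega)
  positivity

lemma card_shell {d : ℕ} (hd : 2 ≤ d) (n : ℕ) (hn : 1 ≤ n) :
    (((box d n).filter fun w => Mn w = n).card : ℝ) ≤ K1 d * (n : ℝ) ^ (d - 1) := by
  rcases Nat.eq_or_lt_of_le hn with h1 | h2
  · -- n = 1
    subst h1
    calc (((box d 1).filter fun w => Mn w = 1).card : ℝ) ≤ ((box d 1).card : ℝ) := by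
          exact_mod_cast Finset.card_filter_le _ _
      _ = (3 : ℝ) ^ d := by rw [card_box]; norm_num
      _ ≤ K1 d * ((1 : ℕ) : ℝ) ^ (d - 1) := by
          unfold K1
          have h3 : (3 : ℝ) ^ d = 3 * 3 ^ (d - 1) := by
            rw [← pow_succ']
            congr 1
            omega
          have hd2 : (2 : ℝ) ≤ (d : ℝ) := by exact_mod_cast hd
          rw [h3]
          have h4 : (0 : ℝ) ≤ 3 ^ (d - 1) := by positivity
          norm_num
          nlinarith
  · -- n ≥ 2
    have hsub : (box d n).filter (fun w => Mn w = n) ⊆ box d n \ box d (n - 1) := by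
      intro w hw
      rw [Finset.mem_filter] at hw
      rw [Finset.mem_sdiff]
      refine ⟨hw.1, ?_⟩
      intro hmem
      have h3 : Mn w ≤ n - 1 := by
        rw [Mn_le_iff (by omega)]
        exact hmem
      omega
    have hle : (2 * (n - 1) + 1) ^ d ≤ (2 * n + 1) ^ d :=
      Nat.pow_le_pow_left (by omega) d
    have hcard : ((box d n \ box d (n - 1)).card : ℝ) =
        ((2 * n + 1 : ℕ) : ℝ) ^ d - ((2 * (n - 1) + 1 : ℕ) : ℝ) ^ d := by
      rw [Finset.card_sdiff_of_subset (box_mono (by omega)), card_box, card_box,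
        Nat.cast_sub hle, Nat.cast_pow, Nat.cast_pow]
    have hA : ((2 * n + 1 : ℕ) : ℝ) = 2 * (n : ℝ) + 1 := by push_cast; ring
    have hB : ((2 * (n - 1) + 1 : ℕ) : ℝ) = 2 * (n : ℝ) - 1 := by
      push_cast [Nat.cast_sub (show 1 ≤ n by omega)]
      ring
    have hn1 : (1 : ℝ) ≤ (n : ℝ) := by exact_mod_cast hn
    calc (((box d n).filter fun w => Mn w = n).card : ℝ)
        ≤ ((box d n \ box d (n - 1)).card : ℝ) := by
          exact_mod_cast Finset.card_le_card hsub
      _ = (2 * (n : ℝ) + 1) ^ d - (2 * (n : ℝ) - 1) ^ d := by rw [hcard, hA, hB]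
      _ ≤ (d : ℝ) * ((2 * (n : ℝ) + 1) - (2 * (n : ℝ) - 1)) * (2 * (n : ℝ) + 1) ^ (d - 1) :=
          pow_sub_pow_le _ _ (by linarith) (by linarith) d
      _ = (d : ℝ) * 2 * (2 * (n : ℝ) + 1) ^ (d - 1) := by ring_nf
      _ ≤ (d : ℝ) * 2 * (3 * (n : ℝ)) ^ (d - 1) := by
          apply mul_le_mul_of_nonneg_left (pow_le_pow_left₀ (by linarith) (by linarith) _)
          have : (0 : ℝ) ≤ (d : ℝ) := by positivity
          linarith
      _ = K1 d * (n : ℝ) ^ (d - 1) := by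
          unfold K1
          rw [mul_pow]
          ring

/-- Shell decomposition of a sum over a finite set of lattice points. -/
lemma sum_shell {d : ℕ} (hd : 2 ≤ d) (x : Fin d → ℤ) (t : Finset (Fin d → ℤ))
    (φ : ℕ → ℝ) (I : Finset ℕ) (hφ : ∀ n ∈ I, 0 ≤ φ n)
    (hI : ∀ z ∈ t, Mn (z - x) ∈ I) (hI1 : ∀ n ∈ I, 1 ≤ n) :
    ∑ z ∈ t, φ (Mn (z - x)) ≤ ∑ n ∈ I, K1 d * (n : ℝ) ^ (d - 1) * φ n := by
  rw [← Finset.sum_fiberwise_of_maps_to' hI (f := φ)]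
  apply Finset.sum_le_sum
  intro n hn
  rw [Finset.sum_const, nsmul_eq_mul]
  apply mul_le_mul_of_nonneg_right _ (hφ n hn)
  -- card of fiber ≤ K1 n^(d-1)
  have hinj : Set.InjOn (fun z => z - x) ((t.filter fun z => Mn (z - x) = n) : Finset _) := by
    intro a _ b _ hab
    simpa [sub_left_inj] using hab
  have hmaps : ∀ z ∈ t.filter fun z => Mn (z - x) = n,
      (fun z => z - x) z ∈ (box d n).filter fun w => Mn w = n := by
    intro z hz
    rw [Finset.mem_filter] at hz ⊢
    refine ⟨?_, hz.2⟩
    rw [← Mn_le_iff (hI1 n hn)]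
    show Mn (z - x) ≤ n
    omega
  calc ((t.filter fun z => Mn (z - x) = n).card : ℝ)
      ≤ (((box d n).filter fun w => Mn w = n).card : ℝ) := by
        exact_mod_cast Finset.card_le_card_of_injOn _ hmaps hinj
    _ ≤ K1 d * (n : ℝ) ^ (d - 1) := card_shell hd n (hI1 n hn)

/-- Bounded-region sum: `∑_{|z-x| ≤ R} |z-x|^{2-d} ≤ K1 R²`. -/
lemma sum_F_bdd {d : ℕ} (hd : 6 < d) (x : Fin d → ℤ) (R : ℕ) (hR : 1 ≤ R)
    (t : Finset (Fin d → ℤ)) (ht : ∀ z ∈ t, Mn (z - x) ≤ R) :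
    ∑ z ∈ t, F (d - 2) (z - x) ≤ K1 d * (R : ℝ) ^ 2 := by
  have hshell := sum_shell (by omega) x t (fun n => ((n : ℝ) ^ (d - 2))⁻¹) (Finset.Icc 1 R)
    (fun n _ => by positivity)
    (fun z hz => Finset.mem_Icc.2 ⟨one_le_Mn _, ht z hz⟩)
    (fun n hn => (Finset.mem_Icc.1 hn).1)
  calc ∑ z ∈ t, F (d - 2) (z - x) = ∑ z ∈ t, ((Mn (z - x) : ℝ) ^ (d - 2))⁻¹ := rfl
    _ ≤ ∑ n ∈ Finset.Icc 1 R, K1 d * (n : ℝ) ^ (d - 1) * ((n : ℝ) ^ (d - 2))⁻¹ := hshell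
    _ ≤ ∑ n ∈ Finset.Icc 1 R, K1 d * (R : ℝ) := by
        apply Finset.sum_le_sum
        intro n hn
        rw [Finset.mem_Icc] at hn
        have hn1 : (1 : ℝ) ≤ (n : ℝ) := by exact_mod_cast hn.1
        have hnR : (n : ℝ) ≤ (R : ℝ) := by exact_mod_cast hn.2
        have hkey : (n : ℝ) ^ (d - 1) * ((n : ℝ) ^ (d - 2))⁻¹ = (n : ℝ) := by
          have h : (n : ℝ) ^ (d - 1) = (n : ℝ) ^ (d - 2) * (n : ℝ) := by
            rw [← pow_succ]; congr 1; omega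
          rw [h]
          field_simp
        rw [mul_assoc, hkey]
        apply mul_le_mul_of_nonneg_left hnR (le_of_lt (K1_pos (by omega)))
    _ ≤ (R : ℝ) * (K1 d * (R : ℝ)) := by
        rw [Finset.sum_const, nsmul_eq_mul, Nat.card_Icc]
        have : ((R + 1 - 1 : ℕ) : ℝ) = (R : ℝ) := by push_cast; ring
        rw [this]
    _ = K1 d * (R : ℝ) ^ 2 := by ring

/-- Tail sum: for `b ≥ d+1`, `∑_{|z-x| ≥ R} |z-x|^{-b} ≤ 2 K1 R^{d-b}`. -/
lemma sum_F_tail {d : ℕ} (hd : 6 < d) (x : Fin d → ℤ) (b R : ℕ) (hb : d + 1 ≤ b) (hR : 1 ≤ R)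
    (t : Finset (Fin d → ℤ)) (ht : ∀ z ∈ t, R ≤ Mn (z - x)) :
    ∑ z ∈ t, F b (z - x) ≤ 2 * K1 d * ((R : ℝ) ^ (b - d))⁻¹ := by
  set N := max R (t.sup fun z => Mn (z - x)) with hN
  have hshell := sum_shell (d := d) (by omega) x t (fun n => ((n : ℝ) ^ b)⁻¹) (Finset.Icc R N)
    (fun n _ => by positivity)
    (fun z hz => Finset.mem_Icc.2 ⟨ht z hz,
      le_max_of_le_right (Finset.le_sup (f := fun z => Mn (z - x)) hz)⟩)
    (fun n hn => le_trans hR (Finset.mem_Icc.1 hn).1)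
  have hq : 2 ≤ b - (d - 1) := by omega
  calc ∑ z ∈ t, F b (z - x) = ∑ z ∈ t, ((Mn (z - x) : ℝ) ^ b)⁻¹ := rfl
    _ ≤ ∑ n ∈ Finset.Icc R N, K1 d * (n : ℝ) ^ (d - 1) * ((n : ℝ) ^ b)⁻¹ := hshell
    _ = ∑ n ∈ Finset.Icc R N, K1 d * ((n : ℝ) ^ (b - (d - 1)))⁻¹ := by
        apply Finset.sum_congr rfl
        intro n hn
        rw [Finset.mem_Icc] at hn
        have hn1 : 1 ≤ n := le_trans hR hn.1
        have hnpos : (0 : ℝ) < (n : ℝ) := by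
          exact_mod_cast Nat.lt_of_lt_of_le Nat.zero_lt_one hn1
        have h : (n : ℝ) ^ b = (n : ℝ) ^ (d - 1) * (n : ℝ) ^ (b - (d - 1)) := by
          rw [← pow_add]; congr 1; omega
        rw [mul_assoc, h, mul_inv]
        have h2 : (n : ℝ) ^ (d - 1) * (((n : ℝ) ^ (d - 1))⁻¹ * ((n : ℝ) ^ (b - (d - 1)))⁻¹) =
            ((n : ℝ) ^ (b - (d - 1)))⁻¹ := by
          field_simp
        rw [h2]
    _ = K1 d * ∑ n ∈ Finset.Icc R N, ((n : ℝ) ^ (b - (d - 1)))⁻¹ := by rw [Finset.mul_sum]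
    _ ≤ K1 d * (2 * ((R : ℝ) ^ (b - (d - 1) - 1))⁻¹) := by
        apply mul_le_mul_of_nonneg_left (sum_inv_pow _ R N hq hR) (le_of_lt (K1_pos (by omega)))
    _ = 2 * K1 d * ((R : ℝ) ^ (b - d))⁻¹ := by
        have h : b - (d - 1) - 1 = b - d := by omega
        rw [h]
        ring

/-! ### Convolution bounds -/

noncomputable def C1 (d : ℕ) : ℝ := 4 * (2 ^ d * K1 d)
noncomputable def C2 (d : ℕ) : ℝ := 2 * (2 ^ (2 * d) * K1 d)

lemma conv1_small {d : ℕ} (hd : 6 < d) (x y : Fin d → ℤ) (t : Finset (Fin d → ℤ))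
    (ht : ∀ z ∈ t, 2 * Mn (z - x) < Mn (x - y)) :
    ∑ z ∈ t, F (d - 2) (z - x) * F (d - 2) (z - y) ≤
      2 ^ d * K1 d * ((Mn (x - y) : ℝ) ^ (d - 4))⁻¹ := by
  have hr : 1 ≤ Mn (x - y) := one_le_Mn _
  have hrpos : (0 : ℝ) < (Mn (x - y) : ℝ) := Mn_pos_real _
  have key : ∀ z ∈ t, F (d - 2) (z - y) ≤ 2 ^ (d - 2) * ((Mn (x - y) : ℝ) ^ (d - 2))⁻¹ := by
    intro z hz
    apply F_le_inv _ hr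
    have htri := Mn_triangle x y z
    have h1 := ht z hz
    omega
  have hpow : ((Mn (x - y) : ℝ) ^ (d - 2))⁻¹ * (Mn (x - y) : ℝ) ^ 2 =
      ((Mn (x - y) : ℝ) ^ (d - 4))⁻¹ := by
    have h : (Mn (x - y) : ℝ) ^ (d - 2) = (Mn (x - y) : ℝ) ^ (d - 4) * (Mn (x - y) : ℝ) ^ 2 := by
      rw [← pow_add]; congr 1; omega
    rw [h, mul_inv]
    field_simp
  have h2 : (2 : ℝ) ^ (d - 2) ≤ 2 ^ d := pow_le_pow_right₀ one_le_two (by omega)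
  have hK := K1_pos (d := d) (by omega)
  calc ∑ z ∈ t, F (d - 2) (z - x) * F (d - 2) (z - y)
      ≤ ∑ z ∈ t, F (d - 2) (z - x) * (2 ^ (d - 2) * ((Mn (x - y) : ℝ) ^ (d - 2))⁻¹) :=
        Finset.sum_le_sum fun z hz => mul_le_mul_of_nonneg_left (key z hz) (F_nonneg _ _)
    _ = (2 ^ (d - 2) * ((Mn (x - y) : ℝ) ^ (d - 2))⁻¹) * ∑ z ∈ t, F (d - 2) (z - x) := by
        rw [← Finset.sum_mul]
        ring
    _ ≤ (2 ^ (d - 2) * ((Mn (x - y) : ℝ) ^ (d - 2))⁻¹) * (K1 d * (Mn (x - y) : ℝ) ^ 2) := by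
        apply mul_le_mul_of_nonneg_left _ (by positivity)
        apply sum_F_bdd hd x (Mn (x - y)) hr t
        intro z hz
        have h1 := ht z hz
        omega
    _ = 2 ^ (d - 2) * K1 d * (((Mn (x - y) : ℝ) ^ (d - 2))⁻¹ * (Mn (x - y) : ℝ) ^ 2) := by ring
    _ = 2 ^ (d - 2) * K1 d * ((Mn (x - y) : ℝ) ^ (d - 4))⁻¹ := by rw [hpow]
    _ ≤ 2 ^ d * K1 d * ((Mn (x - y) : ℝ) ^ (d - 4))⁻¹ := by
        apply mul_le_mul_of_nonneg_right _ (by positivity)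
        apply mul_le_mul_of_nonneg_right h2 (le_of_lt hK)

lemma conv1_big {d : ℕ} (hd : 6 < d) (x y : Fin d → ℤ) (t : Finset (Fin d → ℤ))
    (ht : ∀ z ∈ t, Mn (x - y) ≤ 2 * Mn (z - y) ∧ Mn (z - y) ≤ Mn (z - x)) :
    ∑ z ∈ t, F (d - 2) (z - x) * F (d - 2) (z - y) ≤
      2 ^ d * K1 d * ((Mn (x - y) : ℝ) ^ (d - 4))⁻¹ := by
  have hr : 1 ≤ Mn (x - y) := one_le_Mn _
  set R0 := (Mn (x - y) + 1) / 2 with hR0def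
  have hR0 : 1 ≤ R0 := by omega
  have hK := K1_pos (d := d) (by omega)
  have step1 : ∀ z ∈ t, F (d - 2) (z - x) * F (d - 2) (z - y) ≤ F (2 * d - 4) (z - y) := by
    intro z hz
    have h1 : F (d - 2) (z - x) ≤ F (d - 2) (z - y) := F_anti _ (ht z hz).2
    have h2 := mul_le_mul_of_nonneg_right h1 (F_nonneg (d - 2) (z - y))
    rw [F_mul] at h2
    have h3 : (d - 2) + (d - 2) = 2 * d - 4 := by omega
    rw [h3] at h2
    exact h2
  have step2 : ∑ z ∈ t, F (2 * d - 4) (z - y) ≤ 2 * K1 d * ((R0 : ℝ) ^ (2 * d - 4 - d))⁻¹ := by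
    apply sum_F_tail hd y (2 * d - 4) R0 (by omega) hR0 t
    intro z hz
    have h1 := (ht z hz).1
    omega
  have hdd : 2 * d - 4 - d = d - 4 := by omega
  rw [hdd] at step2
  have step3 : ((R0 : ℝ) ^ (d - 4))⁻¹ ≤ 2 ^ (d - 4) * ((Mn (x - y) : ℝ) ^ (d - 4))⁻¹ :=
    inv_pow_le _ hr (by omega)
  have h4 : (2 : ℝ) * 2 ^ (d - 4) ≤ 2 ^ d := by
    have e : (2 : ℝ) * 2 ^ (d - 4) = 2 ^ (d - 3) := by
      rw [← pow_succ']
      congr 1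
      omega
    rw [e]
    exact pow_le_pow_right₀ one_le_two (by omega)
  calc ∑ z ∈ t, F (d - 2) (z - x) * F (d - 2) (z - y)
      ≤ ∑ z ∈ t, F (2 * d - 4) (z - y) := Finset.sum_le_sum step1
    _ ≤ 2 * K1 d * ((R0 : ℝ) ^ (d - 4))⁻¹ := step2
    _ ≤ 2 * K1 d * (2 ^ (d - 4) * ((Mn (x - y) : ℝ) ^ (d - 4))⁻¹) := by
        apply mul_le_mul_of_nonneg_left step3 (by positivity)
    _ = (2 * 2 ^ (d - 4)) * K1 d * ((Mn (x - y) : ℝ) ^ (d - 4))⁻¹ := by ring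
    _ ≤ 2 ^ d * K1 d * ((Mn (x - y) : ℝ) ^ (d - 4))⁻¹ := by
        apply mul_le_mul_of_nonneg_right _ (by positivity)
        apply mul_le_mul_of_nonneg_right h4 (le_of_lt hK)

lemma conv1 {d : ℕ} (hd : 6 < d) (x y : Fin d → ℤ) (t : Finset (Fin d → ℤ)) :
    ∑ z ∈ t, F (d - 2) (z - x) * F (d - 2) (z - y) ≤
      C1 d * ((Mn (x - y) : ℝ) ^ (d - 4))⁻¹ := by
  classical
  set g : (Fin d → ℤ) → ℝ := fun z => F (d - 2) (z - x) * F (d - 2) (z - y) with hg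
  set B : ℝ := 2 ^ d * K1 d * ((Mn (x - y) : ℝ) ^ (d - 4))⁻¹ with hB
  set p1 : (Fin d → ℤ) → Prop := fun z => 2 * Mn (z - x) < Mn (x - y) with hp1
  set p2 : (Fin d → ℤ) → Prop := fun z => 2 * Mn (z - y) < Mn (x - y) with hp2
  set p3 : (Fin d → ℤ) → Prop := fun z => Mn (z - y) ≤ Mn (z - x) with hp3
  have hsplit1 := Finset.sum_filter_add_sum_filter_not t p1 g
  have hsplit2 := Finset.sum_filter_add_sum_filter_not (t.filter fun z => ¬ p1 z) p2 g
  have hsplit3 :=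
    Finset.sum_filter_add_sum_filter_not
      ((t.filter fun z => ¬ p1 z).filter fun z => ¬ p2 z) p3 g
  have comm : ∀ u : Finset (Fin d → ℤ), ∑ z ∈ u, g z =
      ∑ z ∈ u, F (d - 2) (z - y) * F (d - 2) (z - x) :=
    fun u => Finset.sum_congr rfl fun z _ => mul_comm _ _
  have b1 : ∑ z ∈ t.filter p1, g z ≤ B := by
    apply conv1_small hd x y
    intro z hz
    exact (Finset.mem_filter.1 hz).2
  have b2 : ∑ z ∈ (t.filter fun z => ¬ p1 z).filter p2, g z ≤ B := by
    rw [comm]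
    have := conv1_small hd y x ((t.filter fun z => ¬ p1 z).filter p2) ?_
    · rwa [Mn_sub_comm y x] at this
    · intro z hz
      have h1 := (Finset.mem_filter.1 hz).2
      rw [Mn_sub_comm y x]
      exact h1
  have b3 : ∑ z ∈ (((t.filter fun z => ¬ p1 z).filter fun z => ¬ p2 z).filter p3), g z ≤ B := by
    apply conv1_big hd x y
    intro z hz
    have h1 := Finset.mem_filter.1 hz
    have h2 := Finset.mem_filter.1 h1.1
    have h3 := Finset.mem_filter.1 h2.1
    refine ⟨?_, h1.2⟩
    have := h2.2
    simp only [hp2] at this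
    omega
  have b4 : ∑ z ∈ (((t.filter fun z => ¬ p1 z).filter fun z => ¬ p2 z).filter fun z => ¬ p3 z),
      g z ≤ B := by
    rw [comm]
    have := conv1_big hd y x
      ((((t.filter fun z => ¬ p1 z).filter fun z => ¬ p2 z).filter fun z => ¬ p3 z)) ?_
    · rwa [Mn_sub_comm y x] at this
    · intro z hz
      have h1 := Finset.mem_filter.1 hz
      have h2 := Finset.mem_filter.1 h1.1
      have h3 := Finset.mem_filter.1 h2.1
      have hp1z := h3.2
      have hp3z := h1.2
      simp only [hp1, not_lt] at hp1z
      simp only [hp3, not_le] at hp3z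
      rw [Mn_sub_comm y x]
      exact ⟨hp1z, by omega⟩
  have hBnn : 0 ≤ B := by
    rw [hB]
    have hK := K1_pos (d := d) (by omega)
    positivity
  have : ∑ z ∈ t, g z ≤ 4 * B := by linarith
  calc ∑ z ∈ t, g z ≤ 4 * B := this
    _ = C1 d * ((Mn (x - y) : ℝ) ^ (d - 4))⁻¹ := by
        rw [hB, C1]
        ring

lemma conv2 {d : ℕ} (hd : 6 < d) (x y : Fin d → ℤ) (t : Finset (Fin d → ℤ)) :
    ∑ z ∈ t, F (2 * d - 6) (z - x) * F (d - 2) (z - y) ≤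
      C2 d * ((Mn (x - y) : ℝ) ^ (d - 2))⁻¹ := by
  classical
  have hr : 1 ≤ Mn (x - y) := one_le_Mn _
  have hrpos : (0 : ℝ) < (Mn (x - y) : ℝ) := Mn_pos_real _
  have hr1 : (1 : ℝ) ≤ (Mn (x - y) : ℝ) := by exact_mod_cast hr
  have hK := K1_pos (d := d) (by omega)
  set g : (Fin d → ℤ) → ℝ := fun z => F (2 * d - 6) (z - x) * F (d - 2) (z - y) with hg
  set p : (Fin d → ℤ) → Prop := fun z => 2 * Mn (z - y) < Mn (x - y) with hp
  have hsplit := Finset.sum_filter_add_sum_filter_not t p g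
  have bA : ∑ z ∈ t.filter p, g z ≤
      2 ^ (2 * d) * K1 d * ((Mn (x - y) : ℝ) ^ (d - 2))⁻¹ := by
    have key : ∀ z ∈ t.filter p, F (2 * d - 6) (z - x) ≤
        2 ^ (2 * d - 6) * ((Mn (x - y) : ℝ) ^ (2 * d - 6))⁻¹ := by
      intro z hz
      apply F_le_inv _ hr
      have h1 := (Finset.mem_filter.1 hz).2
      simp only [hp] at h1
      have htri := Mn_triangle x y z
      omega
    have hbdd : ∑ z ∈ t.filter p, F (d - 2) (z - y) ≤ K1 d * (Mn (x - y) : ℝ) ^ 2 := by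
      apply sum_F_bdd hd y (Mn (x - y)) hr
      intro z hz
      have h1 := (Finset.mem_filter.1 hz).2
      simp only [hp] at h1
      omega
    have hpow : ((Mn (x - y) : ℝ) ^ (2 * d - 6))⁻¹ * (Mn (x - y) : ℝ) ^ 2 =
        ((Mn (x - y) : ℝ) ^ (2 * d - 8))⁻¹ := by
      have h : (Mn (x - y) : ℝ) ^ (2 * d - 6) =
          (Mn (x - y) : ℝ) ^ (2 * d - 8) * (Mn (x - y) : ℝ) ^ 2 := by
        rw [← pow_add]; congr 1; omega
      rw [h, mul_inv]
      field_simp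
    have hmono : ((Mn (x - y) : ℝ) ^ (2 * d - 8))⁻¹ ≤ ((Mn (x - y) : ℝ) ^ (d - 2))⁻¹ := by
      apply inv_anti₀ (by positivity)
      exact pow_le_pow_right₀ hr1 (by omega)
    have h2 : (2 : ℝ) ^ (2 * d - 6) ≤ 2 ^ (2 * d) := pow_le_pow_right₀ one_le_two (by omega)
    calc ∑ z ∈ t.filter p, g z
        ≤ ∑ z ∈ t.filter p,
            (2 ^ (2 * d - 6) * ((Mn (x - y) : ℝ) ^ (2 * d - 6))⁻¹) * F (d - 2) (z - y) :=
          Finset.sum_le_sum fun z hz =>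
            mul_le_mul_of_nonneg_right (key z hz) (F_nonneg _ _)
      _ = (2 ^ (2 * d - 6) * ((Mn (x - y) : ℝ) ^ (2 * d - 6))⁻¹) *
            ∑ z ∈ t.filter p, F (d - 2) (z - y) := by rw [Finset.mul_sum]
      _ ≤ (2 ^ (2 * d - 6) * ((Mn (x - y) : ℝ) ^ (2 * d - 6))⁻¹) *
            (K1 d * (Mn (x - y) : ℝ) ^ 2) := by
          apply mul_le_mul_of_nonneg_left hbdd (by positivity)
      _ = 2 ^ (2 * d - 6) * K1 d *
            (((Mn (x - y) : ℝ) ^ (2 * d - 6))⁻¹ * (Mn (x - y) : ℝ) ^ 2) := by ring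
      _ = 2 ^ (2 * d - 6) * K1 d * ((Mn (x - y) : ℝ) ^ (2 * d - 8))⁻¹ := by rw [hpow]
      _ ≤ 2 ^ (2 * d - 6) * K1 d * ((Mn (x - y) : ℝ) ^ (d - 2))⁻¹ := by
          apply mul_le_mul_of_nonneg_left hmono (by positivity)
      _ ≤ 2 ^ (2 * d) * K1 d * ((Mn (x - y) : ℝ) ^ (d - 2))⁻¹ := by
          apply mul_le_mul_of_nonneg_right _ (by positivity)
          apply mul_le_mul_of_nonneg_right h2 (le_of_lt hK)
  have bB : ∑ z ∈ t.filter (fun z => ¬ p z), g z ≤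
      2 ^ (2 * d) * K1 d * ((Mn (x - y) : ℝ) ^ (d - 2))⁻¹ := by
    have key : ∀ z ∈ t.filter (fun z => ¬ p z), F (d - 2) (z - y) ≤
        2 ^ (d - 2) * ((Mn (x - y) : ℝ) ^ (d - 2))⁻¹ := by
      intro z hz
      apply F_le_inv _ hr
      have h1 := (Finset.mem_filter.1 hz).2
      simp only [hp, not_lt] at h1
      omega
    have htail : ∑ z ∈ t.filter (fun z => ¬ p z), F (2 * d - 6) (z - x) ≤ 2 * K1 d := by
      have h := sum_F_tail hd x (2 * d - 6) 1 (by omega) (le_refl 1)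
        (t.filter (fun z => ¬ p z)) (fun z _ => one_le_Mn _)
      simpa using h
    have h2 : (2 : ℝ) * 2 ^ (d - 2) ≤ 2 ^ (2 * d) := by
      have e : (2 : ℝ) * 2 ^ (d - 2) = 2 ^ (d - 1) := by
        rw [← pow_succ']
        congr 1
        omega
      rw [e]
      exact pow_le_pow_right₀ one_le_two (by omega)
    calc ∑ z ∈ t.filter (fun z => ¬ p z), g z
        ≤ ∑ z ∈ t.filter (fun z => ¬ p z),
            F (2 * d - 6) (z - x) * (2 ^ (d - 2) * ((Mn (x - y) : ℝ) ^ (d - 2))⁻¹) :=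
          Finset.sum_le_sum fun z hz =>
            mul_le_mul_of_nonneg_left (key z hz) (F_nonneg _ _)
      _ = (2 ^ (d - 2) * ((Mn (x - y) : ℝ) ^ (d - 2))⁻¹) *
            ∑ z ∈ t.filter (fun z => ¬ p z), F (2 * d - 6) (z - x) := by
          rw [← Finset.sum_mul]
          ring
      _ ≤ (2 ^ (d - 2) * ((Mn (x - y) : ℝ) ^ (d - 2))⁻¹) * (2 * K1 d) := by
          apply mul_le_mul_of_nonneg_left htail (by positivity)
      _ = (2 * 2 ^ (d - 2)) * K1 d * ((Mn (x - y) : ℝ) ^ (d - 2))⁻¹ := by ring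
      _ ≤ 2 ^ (2 * d) * K1 d * ((Mn (x - y) : ℝ) ^ (d - 2))⁻¹ := by
          apply mul_le_mul_of_nonneg_right _ (by positivity)
          apply mul_le_mul_of_nonneg_right h2 (le_of_lt hK)
  have final : ∑ z ∈ t, g z ≤ 2 * (2 ^ (2 * d) * K1 d * ((Mn (x - y) : ℝ) ^ (d - 2))⁻¹) := by
    linarith
  calc ∑ z ∈ t, g z ≤ 2 * (2 ^ (2 * d) * K1 d * ((Mn (x - y) : ℝ) ^ (d - 2))⁻¹) := final
    _ = C2 d * ((Mn (x - y) : ℝ) ^ (d - 2))⁻¹ := by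
        rw [C2]
        ring

/-- Main finite-sum estimate. -/
lemma main_fin {d : ℕ} (hd : 6 < d) (x y : Fin d → ℤ)
    (s : Finset ((Fin d → ℤ) × (Fin d → ℤ))) :
    ∑ p ∈ s, F (d - 2) (x - p.1) * F (d - 2) (p.1 - p.2) *
        F (d - 2) (p.2 - x) * F (d - 2) (p.1 - y) ≤
      C1 d * C2 d * F (d - 2) (x - y) := by
  classical
  set s1 := s.image Prod.fst with hs1
  set s2 := s.image Prod.snd with hs2
  have hsub : s ⊆ s1 ×ˢ s2 := by
    intro p hp
    rw [Finset.mem_product]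
    exact ⟨Finset.mem_image_of_mem _ hp, Finset.mem_image_of_mem _ hp⟩
  have hnn : ∀ p ∈ s1 ×ˢ s2, p ∉ s →
      0 ≤ F (d - 2) (x - p.1) * F (d - 2) (p.1 - p.2) *
        F (d - 2) (p.2 - x) * F (d - 2) (p.1 - y) := by
    intro p _ _
    exact mul_nonneg (mul_nonneg (mul_nonneg (F_nonneg _ _) (F_nonneg _ _)) (F_nonneg _ _))
      (F_nonneg _ _)
  have hK := K1_pos (d := d) (by omega)
  have hC1 : 0 < C1 d := by rw [C1]; positivity
  have hC2 : 0 < C2 d := by rw [C2]; positivity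
  have inner_bd : ∀ z1 : Fin d → ℤ,
      ∑ z2 ∈ s2, F (d - 2) (x - z1) * F (d - 2) (z1 - z2) *
          F (d - 2) (z2 - x) * F (d - 2) (z1 - y) ≤
        C1 d * (F (2 * d - 6) (z1 - x) * F (d - 2) (z1 - y)) := by
    intro z1
    have he : ∀ z2, F (d - 2) (x - z1) * F (d - 2) (z1 - z2) *
        F (d - 2) (z2 - x) * F (d - 2) (z1 - y) =
        (F (d - 2) (z1 - x) * F (d - 2) (z1 - y)) *
          (F (d - 2) (z2 - z1) * F (d - 2) (z2 - x)) := by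
      intro z2
      have e1 : F (d - 2) (x - z1) = F (d - 2) (z1 - x) := by
        unfold F
        rw [Mn_sub_comm]
      have e2 : F (d - 2) (z1 - z2) = F (d - 2) (z2 - z1) := by
        unfold F
        rw [Mn_sub_comm]
      rw [e1, e2]
      ring
    calc ∑ z2 ∈ s2, F (d - 2) (x - z1) * F (d - 2) (z1 - z2) *
            F (d - 2) (z2 - x) * F (d - 2) (z1 - y)
        = (F (d - 2) (z1 - x) * F (d - 2) (z1 - y)) *
            ∑ z2 ∈ s2, F (d - 2) (z2 - z1) * F (d - 2) (z2 - x) := by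
          rw [Finset.mul_sum]
          exact Finset.sum_congr rfl fun z2 _ => he z2
      _ ≤ (F (d - 2) (z1 - x) * F (d - 2) (z1 - y)) *
            (C1 d * ((Mn (z1 - x) : ℝ) ^ (d - 4))⁻¹) := by
          apply mul_le_mul_of_nonneg_left (conv1 hd z1 x s2)
          exact mul_nonneg (F_nonneg _ _) (F_nonneg _ _)
      _ = C1 d * ((F (d - 2) (z1 - x) * F (d - 4) (z1 - x)) * F (d - 2) (z1 - y)) := by
          show _ = C1 d * ((F (d - 2) (z1 - x) * ((Mn (z1 - x) : ℝ) ^ (d - 4))⁻¹) *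
            F (d - 2) (z1 - y))
          ring
      _ = C1 d * (F (2 * d - 6) (z1 - x) * F (d - 2) (z1 - y)) := by
          rw [F_mul]
          congr 3
          omega
  calc ∑ p ∈ s, F (d - 2) (x - p.1) * F (d - 2) (p.1 - p.2) *
          F (d - 2) (p.2 - x) * F (d - 2) (p.1 - y)
      ≤ ∑ p ∈ s1 ×ˢ s2, F (d - 2) (x - p.1) * F (d - 2) (p.1 - p.2) *
          F (d - 2) (p.2 - x) * F (d - 2) (p.1 - y) :=
        Finset.sum_le_sum_of_subset_of_nonneg hsub hnn
    _ = ∑ z1 ∈ s1, ∑ z2 ∈ s2, F (d - 2) (x - z1) * F (d - 2) (z1 - z2) *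
          F (d - 2) (z2 - x) * F (d - 2) (z1 - y) := Finset.sum_product _ _ _
    _ ≤ ∑ z1 ∈ s1, C1 d * (F (2 * d - 6) (z1 - x) * F (d - 2) (z1 - y)) :=
        Finset.sum_le_sum fun z1 _ => inner_bd z1
    _ = C1 d * ∑ z1 ∈ s1, F (2 * d - 6) (z1 - x) * F (d - 2) (z1 - y) := by
        rw [Finset.mul_sum]
    _ ≤ C1 d * (C2 d * ((Mn (x - y) : ℝ) ^ (d - 2))⁻¹) :=
        mul_le_mul_of_nonneg_left (conv2 hd x y s1) (le_of_lt hC1)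
    _ = C1 d * C2 d * F (d - 2) (x - y) := by
        rw [F]
        ring

lemma ipow_eq {d : ℕ} (hd : 2 ≤ d) (w : Fin d → ℤ) :
    ipow w ((d : ℝ) - 2) = F (d - 2) w := by
  unfold ipow F Mn normInf
  by_cases h : w = 0
  · rw [if_pos h, h]
    have hsup : (Finset.univ.sup fun i => ((0 : Fin d → ℤ) i).natAbs) = 0 := by simp
    rw [hsup]
    norm_num
  · rw [if_neg h]
    have hne : ∃ i, w i ≠ 0 := by
      by_contra hc
      push_neg at hc
      exact h (funext hc)
    obtain ⟨i, hi⟩ := hne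
    have hsup : 1 ≤ Finset.univ.sup fun i => (w i).natAbs :=
      le_trans (Int.natAbs_pos.2 hi) (Finset.le_sup (f := fun i => (w i).natAbs) (Finset.mem_univ i))
    rw [max_eq_right hsup]
    have hcast : ((d : ℝ) - 2) = ((d - 2 : ℕ) : ℝ) := by
      rw [Nat.cast_sub (by omega)]
      norm_num
    rw [hcast, Real.rpow_neg (by positivity), Real.rpow_natCast]

end DCAux

/-- For `d > 6` there is `C = C(d) > 0` such that for all `x, y ∈ ℤ^d`,
`∑_{z₁,z₂ ∈ ℤ^d} |x-z₁|^{2-d}|z₁-z₂|^{2-d}|z₂-x|^{2-d}|z₁-y|^{2-d} ≤ C |x-y|^{2-d}`. -/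
theorem double_convolution (d : ℕ) (hd : 6 < d) :
    ∃ C : ℝ, 0 < C ∧ ∀ x y : Fin d → ℤ,
      (∑' z : (Fin d → ℤ) × (Fin d → ℤ),
          ipow (x - z.1) ((d : ℝ) - 2) * ipow (z.1 - z.2) ((d : ℝ) - 2) *
            ipow (z.2 - x) ((d : ℝ) - 2) * ipow (z.1 - y) ((d : ℝ) - 2)) ≤
        C * ipow (x - y) ((d : ℝ) - 2) := by
  have h2d : 2 ≤ d := by omega
  have hK := DCAux.K1_pos (d := d) (by omega)
  have hC1 : 0 < DCAux.C1 d := by rw [DCAux.C1]; positivity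
  have hC2 : 0 < DCAux.C2 d := by rw [DCAux.C2]; positivity
  refine ⟨DCAux.C1 d * DCAux.C2 d, by positivity, ?_⟩
  intro x y
  simp only [DCAux.ipow_eq h2d]
  apply tsum_le_of_sum_le'
  · exact mul_nonneg (by positivity) (DCAux.F_nonneg _ _)
  · intro s
    exact DCAux.main_fin hd x y s
end

section
/- For $d > 6$, there exists a constant $C = C(d) > 0$ such that for all $x, y \in \mathbb{Z}^d$, $\sum_{z_1, z_2, z_3 \in \mathbb{Z}^d} |z_1-z_2|^{2-d} |z_2-z_3|^{2-d} |z_3-z_1|^{2-d} |x-z_1|^{2-d} |y-z_2|^{2-d} \leq C |x-y|^{4-d}$. -/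
open scoped ENNReal

namespace TC

variable {d : ℕ}

/-- the ℓ∞ norm as a natural number -/
def nrm (z : Fin d → ℤ) : ℕ := Finset.univ.sup fun i => (z i).natAbs

lemma normInf_eq (z : Fin d → ℤ) : normInf z = (nrm z : ℝ) := rfl

lemma nrm_eq_zero {z : Fin d → ℤ} : nrm z = 0 ↔ z = 0 := by
  constructor
  · intro h
    funext i
    have := Finset.sup_le_iff.mp h.le i (Finset.mem_univ i)
    simpa [Int.natAbs_eq_zero] using this
  · rintro rfl
    simp [nrm]

lemma one_le_nrm {z : Fin d → ℤ} (hz : z ≠ 0) : 1 ≤ nrm z := by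
  rcases Nat.eq_zero_or_pos (nrm z) with h | h
  · exact absurd (nrm_eq_zero.mp h) hz
  · exact h

lemma nrm_neg (z : Fin d → ℤ) : nrm (-z) = nrm z := by
  simp [nrm]

lemma nrm_coord_le (z : Fin d → ℤ) (i : Fin d) : (z i).natAbs ≤ nrm z :=
  Finset.le_sup (f := fun i => (z i).natAbs) (Finset.mem_univ i)

lemma nrm_add_le (x y : Fin d → ℤ) : nrm (x + y) ≤ nrm x + nrm y := by
  refine Finset.sup_le fun i _ => ?_
  exact (Int.natAbs_add_le _ _).trans (add_le_add (nrm_coord_le x i) (nrm_coord_le y i))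

lemma ipow_nonneg (z : Fin d → ℤ) (a : ℝ) : 0 ≤ ipow z a := by
  unfold ipow
  split
  · norm_num
  · exact Real.rpow_nonneg (by rw [normInf_eq]; positivity) _

lemma ipow_eq {z : Fin d → ℤ} (hz : z ≠ 0) (a : ℝ) : ipow z a = (nrm z : ℝ) ^ (-a) := by
  simp [ipow, hz, normInf_eq]

lemma ipow_zero_arg (a : ℝ) : ipow (0 : Fin d → ℤ) a = 1 := by simp [ipow]

lemma ipow_neg_arg (z : Fin d → ℤ) (a : ℝ) : ipow (-z) a = ipow z a := by
  unfold ipow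
  simp [normInf_eq, nrm_neg, neg_eq_zero]

/-- antitone in the norm -/
lemma ipow_mono {z w : Fin d → ℤ} {a : ℝ} (ha : 0 ≤ a) (h : nrm w ≤ nrm z) :
    ipow z a ≤ ipow w a := by
  by_cases hw : w = 0
  · rw [hw, ipow_zero_arg]
    by_cases hz : z = 0
    · simp [hz, ipow_zero_arg]
    · rw [ipow_eq hz]
      have h1 : (1:ℝ) ≤ (nrm z : ℝ) := by exact_mod_cast one_le_nrm hz
      calc (nrm z : ℝ) ^ (-a) ≤ (nrm z : ℝ) ^ (0:ℝ) :=
            Real.rpow_le_rpow_of_exponent_le h1 (by linarith)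
        _ = 1 := Real.rpow_zero _
  · have hz : z ≠ 0 := by
      intro h0
      rw [h0] at h
      have : nrm w = 0 := by
        have h0' : nrm (0 : Fin d → ℤ) = 0 := nrm_eq_zero.mpr rfl
        omega
      exact absurd (nrm_eq_zero.mp this) hw
    rw [ipow_eq hz, ipow_eq hw]
    have hw1 : (0:ℝ) < (nrm w : ℝ) := by exact_mod_cast one_le_nrm hw
    have hwz : (nrm w : ℝ) ≤ (nrm z : ℝ) := by exact_mod_cast h
    rw [Real.rpow_neg (by positivity), Real.rpow_neg (by positivity)]
    have : (nrm w : ℝ) ^ a ≤ (nrm z : ℝ) ^ a := Real.rpow_le_rpow hw1.le hwz ha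
    have hpos : (0:ℝ) < (nrm w : ℝ) ^ a := Real.rpow_pos_of_pos hw1 a
    exact inv_anti₀ hpos this

lemma ipow_le_one {z : Fin d → ℤ} {a : ℝ} (ha : 0 ≤ a) : ipow z a ≤ 1 := by
  have := ipow_mono (z := z) (w := 0) ha (by simp [nrm_eq_zero.mpr rfl])
  simpa [ipow_zero_arg] using this

/-- if `n ≤ nrm z` and `1 ≤ n` then `ipow z a ≤ n^{-a}` -/
lemma ipow_le_of_le {z : Fin d → ℤ} {a : ℝ} (ha : 0 ≤ a) {n : ℕ} (hn : 1 ≤ n)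
    (h : n ≤ nrm z) : ipow z a ≤ (n : ℝ) ^ (-a) := by
  have hz : z ≠ 0 := by
    intro h0; rw [h0] at h; simp [nrm_eq_zero.mpr rfl] at h; omega
  rw [ipow_eq hz]
  have h1 : (0:ℝ) < (n:ℝ) := by exact_mod_cast hn
  have hle : (n:ℝ) ≤ (nrm z : ℝ) := by exact_mod_cast h
  rw [Real.rpow_neg (by positivity), Real.rpow_neg (by positivity)]
  exact inv_anti₀ (Real.rpow_pos_of_pos h1 a) (Real.rpow_le_rpow h1.le hle ha)

lemma ipow_mul_ipow (z : Fin d → ℤ) (a b : ℝ) : ipow z a * ipow z b = ipow z (a + b) := by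
  by_cases hz : z = 0
  · simp [hz, ipow_zero_arg]
  · rw [ipow_eq hz, ipow_eq hz, ipow_eq hz]
    rw [← Real.rpow_add (by exact_mod_cast one_le_nrm hz : (0:ℝ) < (nrm z : ℝ))]
    ring_nf

/-! ### ENNReal version -/

noncomputable def J (z : Fin d → ℤ) (a : ℝ) : ℝ≥0∞ := ENNReal.ofReal (ipow z a)

lemma J_ne_top (z : Fin d → ℤ) (a : ℝ) : J z a ≠ ⊤ := ENNReal.ofReal_ne_top

lemma J_toReal (z : Fin d → ℤ) (a : ℝ) : (J z a).toReal = ipow z a :=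
  ENNReal.toReal_ofReal (ipow_nonneg z a)

lemma J_zero_arg (a : ℝ) : J (0 : Fin d → ℤ) a = 1 := by
  simp [J, ipow_zero_arg]

lemma J_neg_arg (z : Fin d → ℤ) (a : ℝ) : J (-z) a = J z a := by
  simp [J, ipow_neg_arg]

lemma J_eq {z : Fin d → ℤ} (hz : z ≠ 0) (a : ℝ) :
    J z a = ENNReal.ofReal ((nrm z : ℝ) ^ (-a)) := by
  rw [J, ipow_eq hz]

lemma J_mul_J (z : Fin d → ℤ) (a b : ℝ) : J z a * J z b = J z (a + b) := by
  rw [J, J, J, ← ENNReal.ofReal_mul (ipow_nonneg z a), ipow_mul_ipow]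

lemma J_le_one {z : Fin d → ℤ} {a : ℝ} (ha : 0 ≤ a) : J z a ≤ 1 := by
  rw [J, ← ENNReal.ofReal_one]
  exact ENNReal.ofReal_le_ofReal (ipow_le_one ha)

lemma J_mono {z w : Fin d → ℤ} {a : ℝ} (ha : 0 ≤ a) (h : nrm w ≤ nrm z) :
    J z a ≤ J w a := ENNReal.ofReal_le_ofReal (ipow_mono ha h)

/-- key upper bound: if `1 ≤ r ≤ 2 * nrm w` then `ipow w b ≤ 2^b r^{-b}` -/
lemma ipow_le_half {w : Fin d → ℤ} {b : ℝ} (hb : 0 ≤ b) {r : ℕ} (hr : 1 ≤ r)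
    (h : r ≤ 2 * nrm w) : ipow w b ≤ 2 ^ b * (r : ℝ) ^ (-b) := by
  have hv : 1 ≤ nrm w := by omega
  have hw : w ≠ 0 := fun h0 => by simp [h0, nrm_eq_zero.mpr rfl] at hv
  rw [ipow_eq hw]
  have h2 : (r : ℝ) / 2 ≤ (nrm w : ℝ) := by
    have : (r : ℝ) ≤ 2 * (nrm w : ℝ) := by exact_mod_cast h
    linarith
  have hr2 : (0:ℝ) < (r : ℝ) / 2 := by positivity
  calc (nrm w : ℝ) ^ (-b) ≤ ((r : ℝ) / 2) ^ (-b) := by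
        rw [Real.rpow_neg (by positivity), Real.rpow_neg hr2.le]
        exact inv_anti₀ (Real.rpow_pos_of_pos hr2 b) (Real.rpow_le_rpow hr2.le h2 hb)
    _ = 2 ^ b * (r : ℝ) ^ (-b) := by
        rw [Real.div_rpow (by positivity) (by norm_num), Real.rpow_neg (by positivity),
          Real.rpow_neg (by norm_num : (0:ℝ) ≤ 2)]
        rw [div_eq_mul_inv, inv_inv]
        ring

/-- rpow version for a natural bound -/
lemma half_rpow {c : ℝ} (hc : 0 ≤ c) {r N : ℕ} (hr : 1 ≤ r) (h : r ≤ 2 * N) :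
    (N : ℝ) ^ (-c) ≤ 2 ^ c * (r : ℝ) ^ (-c) := by
  have hN : 1 ≤ N := by omega
  have h2 : (r : ℝ) / 2 ≤ (N : ℝ) := by
    have : (r : ℝ) ≤ 2 * (N : ℝ) := by exact_mod_cast h
    linarith
  have hr2 : (0:ℝ) < (r : ℝ) / 2 := by positivity
  calc (N : ℝ) ^ (-c) ≤ ((r : ℝ) / 2) ^ (-c) := by
        rw [Real.rpow_neg (by positivity), Real.rpow_neg hr2.le]
        exact inv_anti₀ (Real.rpow_pos_of_pos hr2 c) (Real.rpow_le_rpow hr2.le h2 hc)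
    _ = 2 ^ c * (r : ℝ) ^ (-c) := by
        rw [Real.div_rpow (by positivity) (by norm_num), Real.rpow_neg (by positivity),
          Real.rpow_neg (by norm_num : (0:ℝ) ≤ 2)]
        rw [div_eq_mul_inv, inv_inv]
        ring


/-! ### Fiber decomposition machinery -/

lemma tsum_fiber_eq {α β : Type*} (q : α → β) (h : α → ℝ≥0∞) :
    ∑' a, h a = ∑' b : β, ∑' a : {a // q a = b}, h a.1 := by
  rw [← (Equiv.sigmaFiberEquiv q).tsum_eq h]
  rw [ENNReal.tsum_sigma']
  rfl

lemma tsum_subtype_le_card_mul {α : Type*} {s : Set α} (hs : s.Finite) (h : α → ℝ≥0∞)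
    (c : ℝ≥0∞) (hb : ∀ a ∈ s, h a ≤ c) :
    ∑' a : s, h a.1 ≤ (hs.toFinset.card : ℝ≥0∞) * c := by
  classical
  letI := hs.fintype
  rw [tsum_fintype]
  calc ∑ a : s, h a.1 ≤ ∑ _a : s, c :=
        Finset.sum_le_sum fun a _ => hb a.1 a.2
    _ = (Fintype.card s : ℝ≥0∞) * c := by
        rw [Finset.sum_const, nsmul_eq_mul, Fintype.card]
    _ = (hs.toFinset.card : ℝ≥0∞) * c := by
        congr 1
        simp [Set.Finite.card_toFinset]

/-! ### Shell counting -/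

lemma shell_finite (n : ℕ) : {z : Fin d → ℤ | nrm z = n}.Finite := by
  apply Set.Finite.subset (Set.Finite.pi (t := fun _ : Fin d => Set.Icc (-(n:ℤ)) n)
    (fun _ => Set.finite_Icc _ _))
  intro z hz
  simp only [Set.mem_setOf_eq] at hz
  intro i _
  have := nrm_coord_le z i
  rw [hz] at this
  simp only [Set.mem_Icc]
  omega

/-- the number of points on the shell of radius `n ≥ 1` is at most `2d·3^{d-1}·n^{d-1}` -/
lemma shell_card (n : ℕ) (hn : 1 ≤ n) :
    (shell_finite (d := d) n).toFinset.card ≤ 2 * d * 3 ^ (d - 1) * n ^ (d - 1) := by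
  classical
  set B : Finset (Fin d → ℤ) := Finset.univ.biUnion fun i : Fin d =>
    Fintype.piFinset fun j => if j = i then ({(n:ℤ), -(n:ℤ)} : Finset ℤ)
      else Finset.Icc (-(n:ℤ)) n with hB
  have hsub : (shell_finite (d := d) n).toFinset ⊆ B := by
    intro z hz
    rw [Set.Finite.mem_toFinset] at hz
    simp only [Set.mem_setOf_eq] at hz
    have hne : (Finset.univ : Finset (Fin d)).Nonempty := by
      by_contra hcon
      rw [Finset.not_nonempty_iff_eq_empty] at hcon
      have : nrm z = 0 := by rw [nrm, hcon]; rfl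
      omega
    obtain ⟨i, _, hi⟩ := Finset.exists_mem_eq_sup Finset.univ hne fun j => (z j).natAbs
    rw [Finset.mem_biUnion]
    refine ⟨i, Finset.mem_univ i, ?_⟩
    rw [Fintype.mem_piFinset]
    intro j
    by_cases hji : j = i
    · subst hji
      have hval : (z j).natAbs = n := by rw [← hi, ← nrm]; exact hz
      rw [if_pos rfl, Finset.mem_insert, Finset.mem_singleton]
      rcases Int.natAbs_eq (z j) with h | h
      · left; rw [h, hval]
      · right; rw [h, hval]
    · have := nrm_coord_le z j
      rw [hz] at this
      simp only [hji, if_false, Finset.mem_Icc]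
      omega
  calc (shell_finite (d := d) n).toFinset.card ≤ B.card := Finset.card_le_card hsub
    _ ≤ ∑ i : Fin d, (Fintype.piFinset fun j => if j = i then ({(n:ℤ), -(n:ℤ)} : Finset ℤ)
          else Finset.Icc (-(n:ℤ)) n).card := Finset.card_biUnion_le
    _ ≤ ∑ _i : Fin d, 2 * (3 * n) ^ (d - 1) := by
        refine Finset.sum_le_sum fun i _ => ?_
        rw [Fintype.card_piFinset]
        calc ∏ j : Fin d, (if j = i then ({(n:ℤ), -(n:ℤ)} : Finset ℤ)
                else Finset.Icc (-(n:ℤ)) n).card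
            ≤ ∏ j : Fin d, (if j = i then 2 else 3 * n) := by
              refine Finset.prod_le_prod (fun _ _ => Nat.zero_le _) fun j _ => ?_
              by_cases hji : j = i
              · subst hji
                rw [if_pos rfl, if_pos rfl]
                exact (Finset.card_insert_le _ _).trans (by simp)
              · simp only [hji, if_false]
                rw [Int.card_Icc]
                omega
          _ = 2 * (3 * n) ^ (d - 1) := by
              rw [← Finset.mul_prod_erase Finset.univ _ (Finset.mem_univ i), if_pos rfl]
              congr 1
              calc ∏ j ∈ Finset.univ.erase i, (if j = i then 2 else 3 * n)
                  = ∏ _j ∈ Finset.univ.erase i, 3 * n :=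
                    Finset.prod_congr rfl fun j hj => by rw [if_neg (Finset.mem_erase.mp hj).1]
                _ = (3 * n) ^ (d - 1) := by
                    rw [Finset.prod_const, Finset.card_erase_of_mem (Finset.mem_univ i)]
                    simp
    _ = d * (2 * (3 * n) ^ (d - 1)) := by simp [Finset.sum_const, mul_comm]
    _ = 2 * d * 3 ^ (d - 1) * n ^ (d - 1) := by rw [mul_pow]; ring

/-! ### Master shell decomposition -/

/-- shell count bound -/
def Dd (d : ℕ) : ℕ := 2 * d * 3 ^ (d - 1)

lemma tsum_nrm_le (h : (Fin d → ℤ) → ℝ≥0∞) (g : ℕ → ℝ≥0∞)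
    (H : ∀ z, h z ≤ g (nrm z)) :
    ∑' z : Fin d → ℤ, h z ≤ g 0 + ∑' n : ℕ, ((Dd d * n ^ (d - 1) : ℕ) : ℝ≥0∞) * g n := by
  rw [tsum_fiber_eq (nrm : (Fin d → ℤ) → ℕ) h]
  have hfib : ∀ n : ℕ, ∑' z : {z : Fin d → ℤ // nrm z = n}, h z.1 ≤
      ((shell_finite (d := d) n).toFinset.card : ℝ≥0∞) * g n := by
    intro n
    exact tsum_subtype_le_card_mul (shell_finite n) h (g n)
      (fun z hz => by rw [← show nrm z = n from hz]; exact H z)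
  have h0 : ∑' z : {z : Fin d → ℤ // nrm z = 0}, h z.1 ≤ g 0 := by
    refine (hfib 0).trans ?_
    have : ((shell_finite (d := d) 0).toFinset.card : ℝ≥0∞) ≤ 1 := by
      have : (shell_finite (d := d) 0).toFinset ⊆ {0} := by
        intro z hz
        rw [Set.Finite.mem_toFinset] at hz
        simp only [Set.mem_setOf_eq] at hz
        simp [nrm_eq_zero.mp hz]
      have := Finset.card_le_card this
      simp only [Finset.card_singleton] at this
      exact_mod_cast this
    calc _ ≤ 1 * g 0 := mul_le_mul_left this _
      _ = g 0 := one_mul _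
  rw [tsum_eq_zero_add' ENNReal.summable]
  · refine add_le_add h0 ?_
    calc ∑' n : ℕ, ∑' z : {z : Fin d → ℤ // nrm z = n + 1}, h z.1
          ≤ ∑' n : ℕ, ((Dd d * (n + 1) ^ (d - 1) : ℕ) : ℝ≥0∞) * g (n + 1) := by
            refine ENNReal.tsum_le_tsum fun n => (hfib (n + 1)).trans ?_
            refine mul_le_mul_left ?_ _
            exact_mod_cast shell_card (n + 1) (Nat.succ_le_succ (Nat.zero_le n))
        _ ≤ ∑' n : ℕ, ((Dd d * n ^ (d - 1) : ℕ) : ℝ≥0∞) * g n := by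
            conv_rhs => rw [tsum_eq_zero_add' ENNReal.summable]
            exact le_add_self

/-! ### One-dimensional sums -/

noncomputable def Zc (s : ℝ) : ℝ≥0∞ := ∑' n : ℕ, ENNReal.ofReal ((n : ℝ) ^ (-s))

lemma Zc_ne_top {s : ℝ} (hs : 1 < s) : Zc s ≠ ⊤ := by
  have hsum : Summable fun n : ℕ => ((n : ℝ) ^ s)⁻¹ := Real.summable_nat_rpow_inv.mpr hs
  have heq : ∀ n : ℕ, (n : ℝ) ^ (-s) = ((n : ℝ) ^ s)⁻¹ := fun n =>
    Real.rpow_neg (Nat.cast_nonneg n) s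
  have hsum' : Summable fun n : ℕ => (n : ℝ) ^ (-s) := by
    simpa only [heq] using hsum
  rw [Zc, ← ENNReal.ofReal_tsum_of_nonneg (fun n => Real.rpow_nonneg (Nat.cast_nonneg n) _) hsum']
  exact ENNReal.ofReal_ne_top

lemma tail_1d {s : ℝ} (hs : 1 < s) (N : ℕ) (hN : 1 ≤ N) :
    ∑' n : ℕ, (if N ≤ n then ENNReal.ofReal ((n : ℝ) ^ (-s)) else 0) ≤
      Zc s * ENNReal.ofReal ((N : ℝ) ^ (1 - s)) := by
  set F : ℕ → ℝ≥0∞ := fun n => if N ≤ n then ENNReal.ofReal ((n : ℝ) ^ (-s)) else 0 with hF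
  rw [tsum_fiber_eq (fun n : ℕ => n / N) F]
  have key : ∀ m : ℕ, ∑' n : {n : ℕ // n / N = m}, F n.1 ≤
      ENNReal.ofReal ((m : ℝ) ^ (-s)) * ENNReal.ofReal ((N : ℝ) ^ (1 - s)) := by
    intro m
    rcases Nat.eq_zero_or_pos m with rfl | hm
    · have : ∀ n : {n : ℕ // n / N = 0}, F n.1 = 0 := by
        rintro ⟨n, hn⟩
        have : n < N := by
          have := Nat.div_eq_zero_iff.mp hn
          omega
        simp only [hF, if_neg (by omega : ¬ N ≤ n)]
      rw [tsum_congr this, tsum_zero]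
      exact zero_le
    · -- fiber of m ≥ 1
      have hfin : {n : ℕ | n / N = m}.Finite := by
        apply Set.Finite.subset (Set.finite_Icc (m * N) (m * N + N))
        intro n hn
        simp only [Set.mem_setOf_eq] at hn
        simp only [Set.mem_Icc]
        constructor
        · calc m * N = n / N * N := by rw [hn]
            _ ≤ n := Nat.div_mul_le_self n N
        · have hmod := Nat.div_add_mod n N
          rw [hn] at hmod
          have hlt := Nat.mod_lt n (show 0 < N by omega)
          generalize n % N = r at hmod hlt
          rw [mul_comm N m] at hmod
          omega
      have hcard : hfin.toFinset.card ≤ N := by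
        have hsub : hfin.toFinset ⊆ Finset.Ico (m * N) (m * N + N) := by
          intro n hn
          rw [Set.Finite.mem_toFinset] at hn
          simp only [Set.mem_setOf_eq] at hn
          rw [Finset.mem_Ico]
          constructor
          · calc m * N = n / N * N := by rw [hn]
              _ ≤ n := Nat.div_mul_le_self n N
          · have hmod := Nat.div_add_mod n N
            rw [hn] at hmod
            have hlt := Nat.mod_lt n (show 0 < N by omega)
            generalize n % N = r at hmod hlt
            rw [mul_comm N m] at hmod
            omega
        calc hfin.toFinset.card ≤ (Finset.Ico (m * N) (m * N + N)).card :=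
              Finset.card_le_card hsub
          _ = N := by rw [Nat.card_Ico]; omega
      have hbound : ∀ n ∈ {n : ℕ | n / N = m}, F n ≤ ENNReal.ofReal (((m * N : ℕ) : ℝ) ^ (-s)) := by
        intro n hn
        simp only [Set.mem_setOf_eq] at hn
        have h1 : m * N ≤ n := by
          calc m * N = n / N * N := by rw [hn]
            _ ≤ n := Nat.div_mul_le_self n N
        have h2 : 1 ≤ m * N := Nat.mul_pos hm (by omega)
        simp only [hF]
        split
        · apply ENNReal.ofReal_le_ofReal
          have hc : ((m * N : ℕ) : ℝ) ≤ (n : ℝ) := by exact_mod_cast h1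
          have hp : (0 : ℝ) < ((m * N : ℕ) : ℝ) := by exact_mod_cast h2
          rw [Real.rpow_neg (by positivity), Real.rpow_neg (by positivity)]
          exact inv_anti₀ (Real.rpow_pos_of_pos hp s)
            (Real.rpow_le_rpow hp.le hc (by linarith))
        · exact zero_le
      calc ∑' n : {n : ℕ // n / N = m}, F n.1
          ≤ (hfin.toFinset.card : ℝ≥0∞) * ENNReal.ofReal (((m * N : ℕ) : ℝ) ^ (-s)) :=
            tsum_subtype_le_card_mul hfin F _ hbound
        _ ≤ (N : ℝ≥0∞) * ENNReal.ofReal (((m * N : ℕ) : ℝ) ^ (-s)) :=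
            mul_le_mul_left (by exact_mod_cast hcard) _
        _ = ENNReal.ofReal ((m : ℝ) ^ (-s)) * ENNReal.ofReal ((N : ℝ) ^ (1 - s)) := by
            rw [← ENNReal.ofReal_natCast N, ← ENNReal.ofReal_mul (Nat.cast_nonneg N)]
            rw [← ENNReal.ofReal_mul (Real.rpow_nonneg (Nat.cast_nonneg m) _)]
            congr 1
            have hm' : (0:ℝ) < (m:ℝ) := by exact_mod_cast hm
            have hN' : (0:ℝ) < (N:ℝ) := by exact_mod_cast hN
            push_cast
            rw [Real.mul_rpow hm'.le hN'.le]
            rw [show (1 : ℝ) - s = 1 + (-s) by ring, Real.rpow_add hN', Real.rpow_one]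
            ring
  calc ∑' m : ℕ, ∑' n : {n : ℕ // n / N = m}, F n.1
      ≤ ∑' m : ℕ, ENNReal.ofReal ((m : ℝ) ^ (-s)) * ENNReal.ofReal ((N : ℝ) ^ (1 - s)) :=
        ENNReal.tsum_le_tsum key
    _ = Zc s * ENNReal.ofReal ((N : ℝ) ^ (1 - s)) := ENNReal.tsum_mul_right

/-! ### Lattice sum estimates -/

lemma cnt_mul (hd : 1 ≤ d) {n : ℕ} (hn : 1 ≤ n) (c : ℝ) :
    ((Dd d * n ^ (d - 1) : ℕ) : ℝ≥0∞) * ENNReal.ofReal ((n : ℝ) ^ (-c)) =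
      (Dd d : ℝ≥0∞) * ENNReal.ofReal ((n : ℝ) ^ (-(c - d + 1))) := by
  have hn' : (0:ℝ) < (n:ℝ) := by exact_mod_cast hn
  rw [Nat.cast_mul, mul_assoc]
  congr 1
  rw [← ENNReal.ofReal_natCast (n ^ (d - 1)),
    ← ENNReal.ofReal_mul (by positivity)]
  congr 1
  rw [Nat.cast_pow, ← Real.rpow_natCast (n:ℝ) (d-1), ← Real.rpow_add hn']
  congr 1
  have : ((d - 1 : ℕ) : ℝ) = (d : ℝ) - 1 := by
    push_cast [Nat.cast_sub hd]
    ring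
  rw [this]
  ring

lemma full_sum (hd : 2 ≤ d) {c : ℝ} (hc : (d:ℝ) < c) :
    ∑' z : Fin d → ℤ, J z c ≤ 1 + (Dd d : ℝ≥0∞) * Zc (c - d + 1) := by
  refine (tsum_nrm_le (fun z => J z c)
    (fun n => if n = 0 then 1 else ENNReal.ofReal ((n : ℝ) ^ (-c))) ?_).trans ?_
  · intro z
    beta_reduce
    by_cases hz : z = 0
    · rw [hz, J_zero_arg, if_pos (nrm_eq_zero.mpr rfl)]
    · rw [if_neg (fun h => hz (nrm_eq_zero.mp h)), J_eq hz]
  · beta_reduce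
    rw [if_pos rfl]
    refine add_le_add le_rfl ?_
    calc ∑' n : ℕ, ((Dd d * n ^ (d - 1) : ℕ) : ℝ≥0∞) *
          (if n = 0 then 1 else ENNReal.ofReal ((n : ℝ) ^ (-c)))
        ≤ ∑' n : ℕ, (Dd d : ℝ≥0∞) * ENNReal.ofReal ((n : ℝ) ^ (-(c - d + 1))) := by
          refine ENNReal.tsum_le_tsum fun n => ?_
          rcases Nat.eq_zero_or_pos n with rfl | hn
          · have : Dd d * 0 ^ (d - 1) = 0 := by
              rw [Nat.zero_pow (by omega : 0 < d - 1), mul_zero]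
            rw [this]
            simp
          · rw [if_neg (by omega : ¬ n = 0), cnt_mul (by omega) hn]
      _ = (Dd d : ℝ≥0∞) * Zc (c - d + 1) := by rw [ENNReal.tsum_mul_left, Zc]

lemma tail_sum (hd : 2 ≤ d) {c : ℝ} (hc : (d:ℝ) < c) {N : ℕ} (hN : 1 ≤ N) :
    ∑' z : Fin d → ℤ, (if N ≤ nrm z then J z c else 0) ≤
      (Dd d : ℝ≥0∞) * Zc (c - d + 1) * ENNReal.ofReal ((N : ℝ) ^ ((d:ℝ) - c)) := by
  have hs : 1 < c - d + 1 := by linarith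
  refine (tsum_nrm_le _
    (fun n => if N ≤ n then ENNReal.ofReal ((n : ℝ) ^ (-c)) else 0) ?_).trans ?_
  · intro z
    beta_reduce
    by_cases h : N ≤ nrm z
    · rw [if_pos h, if_pos h]
      have hz : z ≠ 0 := by
        intro h0
        rw [h0, nrm_eq_zero.mpr rfl] at h
        omega
      rw [J_eq hz]
    · rw [if_neg h, if_neg h]
  · beta_reduce
    rw [if_neg (by omega : ¬ N ≤ 0), zero_add]
    calc ∑' n : ℕ, ((Dd d * n ^ (d - 1) : ℕ) : ℝ≥0∞) *
          (if N ≤ n then ENNReal.ofReal ((n : ℝ) ^ (-c)) else 0)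
        ≤ ∑' n : ℕ, (Dd d : ℝ≥0∞) *
            (if N ≤ n then ENNReal.ofReal ((n : ℝ) ^ (-(c - d + 1))) else 0) := by
          refine ENNReal.tsum_le_tsum fun n => ?_
          by_cases h : N ≤ n
          · rw [if_pos h, if_pos h, cnt_mul (by omega) (by omega)]
          · rw [if_neg h, if_neg h, mul_zero, mul_zero]
      _ = (Dd d : ℝ≥0∞) * ∑' n : ℕ,
            (if N ≤ n then ENNReal.ofReal ((n : ℝ) ^ (-(c - d + 1))) else 0) :=
          ENNReal.tsum_mul_left
      _ ≤ (Dd d : ℝ≥0∞) * (Zc (c - d + 1) * ENNReal.ofReal ((N : ℝ) ^ (1 - (c - d + 1)))) :=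
          mul_le_mul_right (tail_1d hs N hN) _
      _ = (Dd d : ℝ≥0∞) * Zc (c - d + 1) * ENNReal.ofReal ((N : ℝ) ^ ((d:ℝ) - c)) := by
          rw [show (1 - (c - (d:ℝ) + 1)) = (d:ℝ) - c by ring, mul_assoc]

lemma ball_sum (hd : 2 ≤ d) {a : ℝ} (ha : 0 ≤ a) (had : a ≤ (d:ℝ) - 1) {R : ℕ} (hR : 1 ≤ R) :
    ∑' z : Fin d → ℤ, (if nrm z ≤ R then J z a else 0) ≤
      ((1 : ℝ≥0∞) + Dd d) * ENNReal.ofReal ((R : ℝ) ^ ((d:ℝ) - a)) := by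
  have hR' : (1:ℝ) ≤ (R:ℝ) := by exact_mod_cast hR
  have hone : (1:ℝ≥0∞) ≤ ENNReal.ofReal ((R : ℝ) ^ ((d:ℝ) - a)) := by
    rw [← ENNReal.ofReal_one]
    exact ENNReal.ofReal_le_ofReal (Real.one_le_rpow hR' (by linarith))
  refine (tsum_nrm_le _
    (fun n => if n ≤ R then (if n = 0 then 1 else ENNReal.ofReal ((n : ℝ) ^ (-a))) else 0)
    ?_).trans ?_
  · intro z
    beta_reduce
    by_cases h : nrm z ≤ R
    · rw [if_pos h, if_pos h]
      by_cases hz : z = 0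
      · rw [hz, J_zero_arg, if_pos (nrm_eq_zero.mpr rfl)]
      · rw [if_neg (fun h0 => hz (nrm_eq_zero.mp h0)), J_eq hz]
    · rw [if_neg h, if_neg h]
  · beta_reduce
    rw [if_pos (by omega : 0 ≤ R), if_pos rfl]
    have key : ∑' n : ℕ, ((Dd d * n ^ (d - 1) : ℕ) : ℝ≥0∞) *
          (if n ≤ R then (if n = 0 then 1 else ENNReal.ofReal ((n : ℝ) ^ (-a))) else 0)
        ≤ (Dd d : ℝ≥0∞) * ENNReal.ofReal ((R : ℝ) ^ ((d:ℝ) - a)) := by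
      calc ∑' n : ℕ, ((Dd d * n ^ (d - 1) : ℕ) : ℝ≥0∞) *
            (if n ≤ R then (if n = 0 then 1 else ENNReal.ofReal ((n : ℝ) ^ (-a))) else 0)
          ≤ ∑' n : ℕ, (if 1 ≤ n ∧ n ≤ R then
              (Dd d : ℝ≥0∞) * ENNReal.ofReal ((R : ℝ) ^ ((d:ℝ) - 1 - a)) else 0) := by
            refine ENNReal.tsum_le_tsum fun n => ?_
            rcases Nat.eq_zero_or_pos n with rfl | hn
            · have : Dd d * 0 ^ (d - 1) = 0 := by
                rw [Nat.zero_pow (by omega : 0 < d - 1), mul_zero]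
              rw [this]
              simp
            · by_cases h : n ≤ R
              · rw [if_pos h, if_neg (by omega : ¬ n = 0), if_pos ⟨hn, h⟩,
                  cnt_mul (by omega) hn]
                refine mul_le_mul_right (ENNReal.ofReal_le_ofReal ?_) _
                rw [show (-(a - (d:ℝ) + 1)) = (d:ℝ) - 1 - a by ring]
                exact Real.rpow_le_rpow (by positivity) (by exact_mod_cast h) (by linarith)
              · rw [if_neg h, if_neg (fun hc => h hc.2), mul_zero]
        _ = ∑ n ∈ Finset.Icc 1 R, (if 1 ≤ n ∧ n ≤ R then
              (Dd d : ℝ≥0∞) * ENNReal.ofReal ((R : ℝ) ^ ((d:ℝ) - 1 - a)) else 0) := by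
            refine tsum_eq_sum fun n hn => ?_
            rw [Finset.mem_Icc] at hn
            rw [if_neg (fun hc => hn ⟨hc.1, hc.2⟩)]
        _ ≤ (R : ℝ≥0∞) * ((Dd d : ℝ≥0∞) * ENNReal.ofReal ((R : ℝ) ^ ((d:ℝ) - 1 - a))) := by
            refine (Finset.sum_le_card_nsmul _ _
              ((Dd d : ℝ≥0∞) * ENNReal.ofReal ((R : ℝ) ^ ((d:ℝ) - 1 - a)))
              fun n _ => ?_).trans ?_
            · split
              · exact le_rfl
              · exact zero_le
            · rw [Nat.card_Icc, nsmul_eq_mul]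
              refine mul_le_mul_left ?_ _
              norm_cast
        _ = (Dd d : ℝ≥0∞) * ENNReal.ofReal ((R : ℝ) ^ ((d:ℝ) - a)) := by
            rw [← mul_assoc, mul_comm (R : ℝ≥0∞) (Dd d : ℝ≥0∞), mul_assoc]
            congr 1
            rw [← ENNReal.ofReal_natCast R, ← ENNReal.ofReal_mul (Nat.cast_nonneg R)]
            congr 1
            nth_rewrite 1 [show (R:ℝ) = (R:ℝ) ^ (1:ℝ) from (Real.rpow_one _).symm]
            rw [← Real.rpow_add (by linarith : (0:ℝ) < (R:ℝ))]
            ring_nf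
    calc 1 + ∑' n : ℕ, ((Dd d * n ^ (d - 1) : ℕ) : ℝ≥0∞) *
          (if n ≤ R then (if n = 0 then 1 else ENNReal.ofReal ((n : ℝ) ^ (-a))) else 0)
        ≤ ENNReal.ofReal ((R : ℝ) ^ ((d:ℝ) - a)) +
            (Dd d : ℝ≥0∞) * ENNReal.ofReal ((R : ℝ) ^ ((d:ℝ) - a)) := add_le_add hone key
      _ = ((1 : ℝ≥0∞) + Dd d) * ENNReal.ofReal ((R : ℝ) ^ ((d:ℝ) - a)) := by ring

/-! ### Convolution estimate -/

lemma tsum_shift (x : Fin d → ℤ) (F : (Fin d → ℤ) → ℝ≥0∞) :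
    ∑' z : Fin d → ℤ, F (z - x) = ∑' w : Fin d → ℤ, F w :=
  (Equiv.subRight x).tsum_eq F

lemma ballfull (hd : 2 ≤ d) {a : ℝ} (ha : 0 ≤ a)
    (hcase : a ≤ (d:ℝ) - 1 ∨ (d:ℝ) < a) {e : ℝ} (he : 0 ≤ e) (hea : (d:ℝ) - a ≤ e) :
    ∃ K : ℝ≥0∞, K ≠ ⊤ ∧ ∀ R : ℕ, 1 ≤ R →
      ∑' z : Fin d → ℤ, (if nrm z ≤ R then J z a else 0) ≤
        K * ENNReal.ofReal ((R:ℝ) ^ e) := by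
  rcases hcase with hcase | hcase
  · refine ⟨(1 : ℝ≥0∞) + Dd d, by finiteness, fun R hR => ?_⟩
    refine (ball_sum hd ha hcase hR).trans (mul_le_mul_right (ENNReal.ofReal_le_ofReal ?_) _)
    exact Real.rpow_le_rpow_of_exponent_le (by exact_mod_cast hR) hea
  · refine ⟨1 + (Dd d : ℝ≥0∞) * Zc (a - d + 1), ?_, fun R hR => ?_⟩
    · exact ENNReal.add_ne_top.mpr ⟨ENNReal.one_ne_top,
        ENNReal.mul_ne_top (ENNReal.natCast_ne_top _) (Zc_ne_top (by linarith))⟩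
    · have h1 : (1:ℝ≥0∞) ≤ ENNReal.ofReal ((R : ℝ) ^ e) := by
        rw [← ENNReal.ofReal_one]
        exact ENNReal.ofReal_le_ofReal (Real.one_le_rpow (by exact_mod_cast hR) he)
      calc ∑' z : Fin d → ℤ, (if nrm z ≤ R then J z a else 0)
          ≤ ∑' z : Fin d → ℤ, J z a :=
            ENNReal.tsum_le_tsum fun z => by split <;> simp
        _ ≤ 1 + (Dd d : ℝ≥0∞) * Zc (a - d + 1) := full_sum hd hcase
        _ ≤ (1 + (Dd d : ℝ≥0∞) * Zc (a - d + 1)) * ENNReal.ofReal ((R : ℝ) ^ e) :=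
            le_mul_of_one_le_right' h1

lemma conv (hd : 2 ≤ d) {a b m : ℝ} (ha : 0 ≤ a) (hb : 0 ≤ b) (hm : 0 ≤ m)
    (hma : m ≤ a) (hmb : m ≤ b) (hmab : m ≤ a + b - d) (hab : (d:ℝ) < a + b)
    (hacase : a ≤ (d:ℝ) - 1 ∨ (d:ℝ) < a) (hbcase : b ≤ (d:ℝ) - 1 ∨ (d:ℝ) < b) :
    ∃ K : ℝ≥0∞, K ≠ ⊤ ∧ ∀ x y : Fin d → ℤ,
      ∑' z : Fin d → ℤ, J (z - x) a * J (z - y) b ≤ K * J (x - y) m := by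
  obtain ⟨Ka, hKa, HA⟩ := ballfull hd ha hacase (e := b - m) (by linarith) (by linarith)
  obtain ⟨Kb, hKb, HB⟩ := ballfull hd hb hbcase (e := a - m) (by linarith) (by linarith)
  set Kt : ℝ≥0∞ := (Dd d : ℝ≥0∞) * Zc (a + b - ↑d + 1) with hKtdef
  have hKt : Kt ≠ ⊤ :=
    ENNReal.mul_ne_top (ENNReal.natCast_ne_top _) (Zc_ne_top (by linarith))
  set ct : ℝ≥0∞ := ENNReal.ofReal (2 ^ (a + b - ↑d)) with hct
  refine ⟨(1 + Kt) + ENNReal.ofReal (2 ^ b) * Ka + ENNReal.ofReal (2 ^ a) * Kb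
      + (ct * Kt + ct * Kt), ?_, ?_⟩
  · refine ENNReal.add_ne_top.mpr ⟨ENNReal.add_ne_top.mpr ⟨ENNReal.add_ne_top.mpr
      ⟨ENNReal.add_ne_top.mpr ⟨ENNReal.one_ne_top, hKt⟩, ?_⟩, ?_⟩, ?_⟩
    · exact ENNReal.mul_ne_top ENNReal.ofReal_ne_top hKa
    · exact ENNReal.mul_ne_top ENNReal.ofReal_ne_top hKb
    · exact ENNReal.add_ne_top.mpr ⟨ENNReal.mul_ne_top ENNReal.ofReal_ne_top hKt,
        ENNReal.mul_ne_top ENNReal.ofReal_ne_top hKt⟩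
  intro x y
  by_cases hxy : x = y
  · subst hxy
    have hsub : x - x = 0 := sub_self x
    rw [hsub, J_zero_arg, mul_one]
    calc ∑' z : Fin d → ℤ, J (z - x) a * J (z - x) b
        = ∑' z : Fin d → ℤ, J (z - x) (a + b) := tsum_congr fun z => J_mul_J _ _ _
      _ = ∑' w : Fin d → ℤ, J w (a + b) := tsum_shift x (fun w => J w (a + b))
      _ ≤ 1 + (Dd d : ℝ≥0∞) * Zc (a + b - ↑d + 1) := full_sum hd hab
      _ ≤ _ := by
          rw [← hKtdef]
          exact le_add_right (le_add_right (le_add_right le_rfl))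
  · set r : ℕ := nrm (x - y) with hrdef
    have hxy' : x - y ≠ 0 := sub_ne_zero.mpr hxy
    have hr1 : 1 ≤ r := one_le_nrm hxy'
    have hrR : (1:ℝ) ≤ (r:ℝ) := by exact_mod_cast hr1
    have hrpos : (0:ℝ) < (r:ℝ) := by linarith
    have hJxy : J (x - y) m = ENNReal.ofReal ((r:ℝ) ^ (-m)) := J_eq hxy' m
    have htri : ∀ z : Fin d → ℤ, r ≤ nrm (z - x) + nrm (z - y) := by
      intro z
      calc r = nrm (x - y) := hrdef
        _ = nrm (-(z - x) + (z - y)) := by congr 1; ring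
        _ ≤ nrm (-(z - x)) + nrm (z - y) := nrm_add_le _ _
        _ = nrm (z - x) + nrm (z - y) := by rw [nrm_neg]
    set F : (Fin d → ℤ) → ℝ≥0∞ := fun z => J (z - x) a * J (z - y) b with hF
    -- region A
    have hA : ∑' z : Fin d → ℤ, (if 2 * nrm (z - x) < r then F z else 0) ≤
        ENNReal.ofReal (2 ^ b) * Ka * J (x - y) m := by
      have hpt : ∀ z : Fin d → ℤ, (if 2 * nrm (z - x) < r then F z else 0) ≤
          ENNReal.ofReal (2 ^ b * (r:ℝ) ^ (-b)) *
            (if nrm (z - x) ≤ r then J (z - x) a else 0) := by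
        intro z
        split_ifs with h1 h2
        · have hv : r ≤ 2 * nrm (z - y) := by have := htri z; omega
          have hJb : J (z - y) b ≤ ENNReal.ofReal (2 ^ b * (r:ℝ) ^ (-b)) :=
            ENNReal.ofReal_le_ofReal (ipow_le_half hb hr1 hv)
          calc F z = J (z - y) b * J (z - x) a := mul_comm _ _
            _ ≤ ENNReal.ofReal (2 ^ b * (r:ℝ) ^ (-b)) * J (z - x) a :=
              mul_le_mul_left hJb _
        · exact absurd (by omega : nrm (z - x) ≤ r) h2
        · exact zero_le
        · exact zero_le
      calc ∑' z : Fin d → ℤ, (if 2 * nrm (z - x) < r then F z else 0)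
          ≤ ∑' z : Fin d → ℤ, ENNReal.ofReal (2 ^ b * (r:ℝ) ^ (-b)) *
              (if nrm (z - x) ≤ r then J (z - x) a else 0) := ENNReal.tsum_le_tsum hpt
        _ = ENNReal.ofReal (2 ^ b * (r:ℝ) ^ (-b)) *
              ∑' z : Fin d → ℤ, (if nrm (z - x) ≤ r then J (z - x) a else 0) :=
            ENNReal.tsum_mul_left
        _ = ENNReal.ofReal (2 ^ b * (r:ℝ) ^ (-b)) *
              ∑' w : Fin d → ℤ, (if nrm w ≤ r then J w a else 0) := by
            rw [tsum_shift x (fun w => if nrm w ≤ r then J w a else 0)]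
        _ ≤ ENNReal.ofReal (2 ^ b * (r:ℝ) ^ (-b)) *
              (Ka * ENNReal.ofReal ((r:ℝ) ^ (b - m))) := mul_le_mul_right (HA r hr1) _
        _ = ENNReal.ofReal (2 ^ b) * Ka * J (x - y) m := by
            rw [hJxy, ENNReal.ofReal_mul (by positivity : (0:ℝ) ≤ 2 ^ b)]
            have hrr : ENNReal.ofReal ((r:ℝ) ^ (-b)) * ENNReal.ofReal ((r:ℝ) ^ (b - m)) =
                ENNReal.ofReal ((r:ℝ) ^ (-m)) := by
              rw [← ENNReal.ofReal_mul (Real.rpow_nonneg hrpos.le _), ← Real.rpow_add hrpos]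
              congr 1
              ring_nf
            calc ENNReal.ofReal (2 ^ b) * ENNReal.ofReal ((r:ℝ) ^ (-b)) *
                  (Ka * ENNReal.ofReal ((r:ℝ) ^ (b - m)))
                = ENNReal.ofReal (2 ^ b) * Ka *
                    (ENNReal.ofReal ((r:ℝ) ^ (-b)) * ENNReal.ofReal ((r:ℝ) ^ (b - m))) := by
                  ring
              _ = ENNReal.ofReal (2 ^ b) * Ka * ENNReal.ofReal ((r:ℝ) ^ (-m)) := by rw [hrr]
    -- region B
    have hB : ∑' z : Fin d → ℤ, (if 2 * nrm (z - y) < r then F z else 0) ≤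
        ENNReal.ofReal (2 ^ a) * Kb * J (x - y) m := by
      have hpt : ∀ z : Fin d → ℤ, (if 2 * nrm (z - y) < r then F z else 0) ≤
          ENNReal.ofReal (2 ^ a * (r:ℝ) ^ (-a)) *
            (if nrm (z - y) ≤ r then J (z - y) b else 0) := by
        intro z
        split_ifs with h1 h2
        · have hv : r ≤ 2 * nrm (z - x) := by have := htri z; omega
          have hJa : J (z - x) a ≤ ENNReal.ofReal (2 ^ a * (r:ℝ) ^ (-a)) :=
            ENNReal.ofReal_le_ofReal (ipow_le_half ha hr1 hv)
          exact mul_le_mul_left hJa _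
        · exact absurd (by omega : nrm (z - y) ≤ r) h2
        · exact zero_le
        · exact zero_le
      calc ∑' z : Fin d → ℤ, (if 2 * nrm (z - y) < r then F z else 0)
          ≤ ∑' z : Fin d → ℤ, ENNReal.ofReal (2 ^ a * (r:ℝ) ^ (-a)) *
              (if nrm (z - y) ≤ r then J (z - y) b else 0) := ENNReal.tsum_le_tsum hpt
        _ = ENNReal.ofReal (2 ^ a * (r:ℝ) ^ (-a)) *
              ∑' z : Fin d → ℤ, (if nrm (z - y) ≤ r then J (z - y) b else 0) :=
            ENNReal.tsum_mul_left
        _ = ENNReal.ofReal (2 ^ a * (r:ℝ) ^ (-a)) *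
              ∑' w : Fin d → ℤ, (if nrm w ≤ r then J w b else 0) := by
            rw [tsum_shift y (fun w => if nrm w ≤ r then J w b else 0)]
        _ ≤ ENNReal.ofReal (2 ^ a * (r:ℝ) ^ (-a)) *
              (Kb * ENNReal.ofReal ((r:ℝ) ^ (a - m))) := mul_le_mul_right (HB r hr1) _
        _ = ENNReal.ofReal (2 ^ a) * Kb * J (x - y) m := by
            rw [hJxy, ENNReal.ofReal_mul (by positivity : (0:ℝ) ≤ 2 ^ a)]
            have hrr : ENNReal.ofReal ((r:ℝ) ^ (-a)) * ENNReal.ofReal ((r:ℝ) ^ (a - m)) =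
                ENNReal.ofReal ((r:ℝ) ^ (-m)) := by
              rw [← ENNReal.ofReal_mul (Real.rpow_nonneg hrpos.le _), ← Real.rpow_add hrpos]
              congr 1
              ring_nf
            calc ENNReal.ofReal (2 ^ a) * ENNReal.ofReal ((r:ℝ) ^ (-a)) *
                  (Kb * ENNReal.ofReal ((r:ℝ) ^ (a - m)))
                = ENNReal.ofReal (2 ^ a) * Kb *
                    (ENNReal.ofReal ((r:ℝ) ^ (-a)) * ENNReal.ofReal ((r:ℝ) ^ (a - m))) := by
                  ring
              _ = ENNReal.ofReal (2 ^ a) * Kb * ENNReal.ofReal ((r:ℝ) ^ (-m)) := by rw [hrr]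
    -- tail bound used by both C regions
    have htail : ∀ w0 : Fin d → ℤ,
        ∑' w : Fin d → ℤ, (if (r + 1) / 2 ≤ nrm w then J w (a + b) else 0) ≤
          ct * Kt * J (x - y) m := by
      intro w0
      have hN1 : 1 ≤ (r + 1) / 2 := by omega
      have hNr : r ≤ 2 * ((r + 1) / 2) := by omega
      calc ∑' w : Fin d → ℤ, (if (r + 1) / 2 ≤ nrm w then J w (a + b) else 0)
          ≤ (Dd d : ℝ≥0∞) * Zc (a + b - ↑d + 1) *
              ENNReal.ofReal ((((r + 1) / 2 : ℕ) : ℝ) ^ ((d:ℝ) - (a + b))) :=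
            tail_sum hd hab hN1
        _ ≤ Kt * ENNReal.ofReal (2 ^ (a + b - ↑d) * (r:ℝ) ^ (-(a + b - (d:ℝ)))) := by
            rw [← hKtdef]
            refine mul_le_mul_right (ENNReal.ofReal_le_ofReal ?_) _
            rw [show (d:ℝ) - (a + b) = -(a + b - (d:ℝ)) by ring]
            exact half_rpow (by linarith) hr1 hNr
        _ ≤ ct * Kt * J (x - y) m := by
            rw [hJxy, hct, ENNReal.ofReal_mul (by positivity : (0:ℝ) ≤ 2 ^ (a + b - (d:ℝ)))]
            have h1 : ENNReal.ofReal ((r:ℝ) ^ (-(a + b - (d:ℝ)))) ≤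
                ENNReal.ofReal ((r:ℝ) ^ (-m)) :=
              ENNReal.ofReal_le_ofReal
                (Real.rpow_le_rpow_of_exponent_le hrR (by linarith))
            calc Kt * (ENNReal.ofReal (2 ^ (a + b - (d:ℝ))) *
                  ENNReal.ofReal ((r:ℝ) ^ (-(a + b - (d:ℝ)))))
                ≤ Kt * (ENNReal.ofReal (2 ^ (a + b - (d:ℝ))) *
                    ENNReal.ofReal ((r:ℝ) ^ (-m))) :=
                  mul_le_mul_right (mul_le_mul_right h1 _) _
              _ = ENNReal.ofReal (2 ^ (a + b - (d:ℝ))) * Kt *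
                    ENNReal.ofReal ((r:ℝ) ^ (-m)) := by ring
    -- region C1
    have hC1 : ∑' z : Fin d → ℤ, (if r ≤ 2 * nrm (z - x) ∧ r ≤ 2 * nrm (z - y) ∧
          nrm (z - y) ≤ nrm (z - x) then F z else 0) ≤ ct * Kt * J (x - y) m := by
      have hpt : ∀ z : Fin d → ℤ, (if r ≤ 2 * nrm (z - x) ∧ r ≤ 2 * nrm (z - y) ∧
          nrm (z - y) ≤ nrm (z - x) then F z else 0) ≤
          (if (r + 1) / 2 ≤ nrm (z - y) then J (z - y) (a + b) else 0) := by
        intro z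
        split_ifs with h1 h2
        · obtain ⟨hu, hv, hvu⟩ := h1
          calc F z ≤ J (z - y) a * J (z - y) b :=
              mul_le_mul_left (J_mono ha hvu) _
            _ = J (z - y) (a + b) := J_mul_J _ _ _
        · exact absurd (by omega : (r + 1) / 2 ≤ nrm (z - y)) h2
        · exact zero_le
        · exact zero_le
      calc ∑' z : Fin d → ℤ, (if r ≤ 2 * nrm (z - x) ∧ r ≤ 2 * nrm (z - y) ∧
            nrm (z - y) ≤ nrm (z - x) then F z else 0)
          ≤ ∑' z : Fin d → ℤ, (if (r + 1) / 2 ≤ nrm (z - y) then J (z - y) (a + b) else 0) :=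
            ENNReal.tsum_le_tsum hpt
        _ = ∑' w : Fin d → ℤ, (if (r + 1) / 2 ≤ nrm w then J w (a + b) else 0) := by
            rw [tsum_shift y (fun w => if (r + 1) / 2 ≤ nrm w then J w (a + b) else 0)]
        _ ≤ ct * Kt * J (x - y) m := htail 0
    -- region C2
    have hC2 : ∑' z : Fin d → ℤ, (if r ≤ 2 * nrm (z - x) ∧ r ≤ 2 * nrm (z - y) ∧
          nrm (z - x) ≤ nrm (z - y) then F z else 0) ≤ ct * Kt * J (x - y) m := by
      have hpt : ∀ z : Fin d → ℤ, (if r ≤ 2 * nrm (z - x) ∧ r ≤ 2 * nrm (z - y) ∧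
          nrm (z - x) ≤ nrm (z - y) then F z else 0) ≤
          (if (r + 1) / 2 ≤ nrm (z - x) then J (z - x) (a + b) else 0) := by
        intro z
        split_ifs with h1 h2
        · obtain ⟨hu, hv, huv⟩ := h1
          calc F z ≤ J (z - x) a * J (z - x) b :=
              mul_le_mul_right (J_mono hb huv) _
            _ = J (z - x) (a + b) := J_mul_J _ _ _
        · exact absurd (by omega : (r + 1) / 2 ≤ nrm (z - x)) h2
        · exact zero_le
        · exact zero_le
      calc ∑' z : Fin d → ℤ, (if r ≤ 2 * nrm (z - x) ∧ r ≤ 2 * nrm (z - y) ∧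
            nrm (z - x) ≤ nrm (z - y) then F z else 0)
          ≤ ∑' z : Fin d → ℤ, (if (r + 1) / 2 ≤ nrm (z - x) then J (z - x) (a + b) else 0) :=
            ENNReal.tsum_le_tsum hpt
        _ = ∑' w : Fin d → ℤ, (if (r + 1) / 2 ≤ nrm w then J w (a + b) else 0) := by
            rw [tsum_shift x (fun w => if (r + 1) / 2 ≤ nrm w then J w (a + b) else 0)]
        _ ≤ ct * Kt * J (x - y) m := htail 0
    -- combine
    have hdecomp : ∀ z : Fin d → ℤ, F z ≤
        (if 2 * nrm (z - x) < r then F z else 0) +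
        (if 2 * nrm (z - y) < r then F z else 0) +
        (if r ≤ 2 * nrm (z - x) ∧ r ≤ 2 * nrm (z - y) ∧
          nrm (z - y) ≤ nrm (z - x) then F z else 0) +
        (if r ≤ 2 * nrm (z - x) ∧ r ≤ 2 * nrm (z - y) ∧
          nrm (z - x) ≤ nrm (z - y) then F z else 0) := by
      intro z
      by_cases h1 : 2 * nrm (z - x) < r
      · rw [if_pos h1]
        exact le_add_right (le_add_right (le_add_right le_rfl))
      · by_cases h2 : 2 * nrm (z - y) < r
        · rw [if_pos h2]
          exact le_add_right (le_add_right le_add_self)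
        · by_cases h3 : nrm (z - y) ≤ nrm (z - x)
          · have hc : r ≤ 2 * nrm (z - x) ∧ r ≤ 2 * nrm (z - y) ∧
                nrm (z - y) ≤ nrm (z - x) := ⟨by omega, by omega, h3⟩
            rw [if_pos hc]
            exact le_add_right le_add_self
          · have hc : r ≤ 2 * nrm (z - x) ∧ r ≤ 2 * nrm (z - y) ∧
                nrm (z - x) ≤ nrm (z - y) := ⟨by omega, by omega, by omega⟩
            rw [if_pos hc]
            exact le_add_self
    calc ∑' z : Fin d → ℤ, F z
        ≤ ∑' z : Fin d → ℤ, ((if 2 * nrm (z - x) < r then F z else 0) +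
            (if 2 * nrm (z - y) < r then F z else 0) +
            (if r ≤ 2 * nrm (z - x) ∧ r ≤ 2 * nrm (z - y) ∧
              nrm (z - y) ≤ nrm (z - x) then F z else 0) +
            (if r ≤ 2 * nrm (z - x) ∧ r ≤ 2 * nrm (z - y) ∧
              nrm (z - x) ≤ nrm (z - y) then F z else 0)) := ENNReal.tsum_le_tsum hdecomp
      _ = (∑' z : Fin d → ℤ, (if 2 * nrm (z - x) < r then F z else 0)) +
          (∑' z : Fin d → ℤ, (if 2 * nrm (z - y) < r then F z else 0)) +
          (∑' z : Fin d → ℤ, (if r ≤ 2 * nrm (z - x) ∧ r ≤ 2 * nrm (z - y) ∧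
            nrm (z - y) ≤ nrm (z - x) then F z else 0)) +
          (∑' z : Fin d → ℤ, (if r ≤ 2 * nrm (z - x) ∧ r ≤ 2 * nrm (z - y) ∧
            nrm (z - x) ≤ nrm (z - y) then F z else 0)) := by
          rw [ENNReal.tsum_add, ENNReal.tsum_add, ENNReal.tsum_add]
      _ ≤ ENNReal.ofReal (2 ^ b) * Ka * J (x - y) m +
          ENNReal.ofReal (2 ^ a) * Kb * J (x - y) m +
          ct * Kt * J (x - y) m + ct * Kt * J (x - y) m :=
          add_le_add (add_le_add (add_le_add hA hB) hC1) hC2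
      _ ≤ ((1 + Kt) + ENNReal.ofReal (2 ^ b) * Ka + ENNReal.ofReal (2 ^ a) * Kb
            + (ct * Kt + ct * Kt)) * J (x - y) m := by
          have expand : ((1 + Kt) + ENNReal.ofReal (2 ^ b) * Ka + ENNReal.ofReal (2 ^ a) * Kb
              + (ct * Kt + ct * Kt)) * J (x - y) m
              = (ENNReal.ofReal (2 ^ b) * Ka * J (x - y) m +
                  ENNReal.ofReal (2 ^ a) * Kb * J (x - y) m +
                  (ct * Kt * J (x - y) m + ct * Kt * J (x - y) m)) +
                (1 + Kt) * J (x - y) m := by ring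
          rw [expand]
          have hre : ENNReal.ofReal (2 ^ b) * Ka * J (x - y) m +
              ENNReal.ofReal (2 ^ a) * Kb * J (x - y) m +
              ct * Kt * J (x - y) m + ct * Kt * J (x - y) m
              = ENNReal.ofReal (2 ^ b) * Ka * J (x - y) m +
                ENNReal.ofReal (2 ^ a) * Kb * J (x - y) m +
                (ct * Kt * J (x - y) m + ct * Kt * J (x - y) m) := by ring
          rw [hre]
          exact le_add_right le_rfl

/-! ### From ENNReal to Real -/

lemma real_tsum_le {β : Type*} (G : β → ℝ) (hG : ∀ b, 0 ≤ G b) {L : ℝ≥0∞} (hL : L ≠ ⊤)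
    (h : ∑' b_, ENNReal.ofReal (G b_) ≤ L) : ∑' b_, G b_ ≤ L.toReal := by
  by_cases hs : Summable G
  · have heq := ENNReal.ofReal_tsum_of_nonneg hG hs
    have h2 : ENNReal.ofReal (∑' b_, G b_) ≤ L := heq ▸ h
    calc ∑' b_, G b_ = (ENNReal.ofReal (∑' b_, G b_)).toReal :=
          (ENNReal.toReal_ofReal (tsum_nonneg hG)).symm
      _ ≤ L.toReal := ENNReal.toReal_mono hL h2
  · rw [tsum_eq_zero_of_not_summable hs]
    exact ENNReal.toReal_nonneg

lemma J_swap (u v : Fin d → ℤ) (e : ℝ) : J (u - v) e = J (v - u) e := by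
  rw [← neg_sub v u, J_neg_arg]

end TC

open TC in
/-- For `d > 6` there is `C = C(d) > 0` such that for all `x, y ∈ ℤ^d`,
`∑_{z₁,z₂,z₃} |z₁-z₂|^{2-d}|z₂-z₃|^{2-d}|z₃-z₁|^{2-d}|x-z₁|^{2-d}|y-z₂|^{2-d}
  ≤ C |x-y|^{4-d}`. -/
theorem triple_convolution (d : ℕ) (hd : 6 < d) :
    ∃ C : ℝ, 0 < C ∧ ∀ x y : Fin d → ℤ,
      (∑' z : (Fin d → ℤ) × (Fin d → ℤ) × (Fin d → ℤ),
          ipow (z.1 - z.2.1) ((d : ℝ) - 2) * ipow (z.2.1 - z.2.2) ((d : ℝ) - 2) *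
            ipow (z.2.2 - z.1) ((d : ℝ) - 2) * ipow (x - z.1) ((d : ℝ) - 2) *
            ipow (y - z.2.1) ((d : ℝ) - 2)) ≤
        C * ipow (x - y) ((d : ℝ) - 4) := by
  have hd2 : 2 ≤ d := by omega
  have hd7 : (7:ℝ) ≤ (d:ℝ) := by exact_mod_cast hd
  obtain ⟨K₁, hK₁, H₁⟩ := conv (d := d) hd2
    (a := (d:ℝ) - 2) (b := (d:ℝ) - 2) (m := (d:ℝ) - 4)
    (by linarith) (by linarith) (by linarith) (by linarith) (by linarith)
    (by linarith) (by linarith) (Or.inl (by linarith)) (Or.inl (by linarith))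
  obtain ⟨K₂, hK₂, H₂⟩ := conv (d := d) hd2
    (a := 2*(d:ℝ) - 6) (b := (d:ℝ) - 2) (m := (d:ℝ) - 2)
    (by linarith) (by linarith) (by linarith) (by linarith) (by linarith)
    (by linarith) (by linarith) (Or.inr (by linarith)) (Or.inl (by linarith))
  set Ktot : ℝ≥0∞ := K₁ * K₂ * K₁ with hKtot
  have hKtotTop : Ktot ≠ ⊤ := ENNReal.mul_ne_top (ENNReal.mul_ne_top hK₁ hK₂) hK₁
  refine ⟨Ktot.toReal + 1, by positivity, fun x y => ?_⟩
  have hnn : ∀ z : (Fin d → ℤ) × (Fin d → ℤ) × (Fin d → ℤ),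
      0 ≤ ipow (z.1 - z.2.1) ((d : ℝ) - 2) * ipow (z.2.1 - z.2.2) ((d : ℝ) - 2) *
        ipow (z.2.2 - z.1) ((d : ℝ) - 2) * ipow (x - z.1) ((d : ℝ) - 2) *
        ipow (y - z.2.1) ((d : ℝ) - 2) := fun z =>
    mul_nonneg (mul_nonneg (mul_nonneg (mul_nonneg (ipow_nonneg _ _) (ipow_nonneg _ _))
      (ipow_nonneg _ _)) (ipow_nonneg _ _)) (ipow_nonneg _ _)
  have hofReal : ∀ z : (Fin d → ℤ) × (Fin d → ℤ) × (Fin d → ℤ),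
      ENNReal.ofReal (ipow (z.1 - z.2.1) ((d : ℝ) - 2) * ipow (z.2.1 - z.2.2) ((d : ℝ) - 2) *
        ipow (z.2.2 - z.1) ((d : ℝ) - 2) * ipow (x - z.1) ((d : ℝ) - 2) *
        ipow (y - z.2.1) ((d : ℝ) - 2)) =
      J (z.1 - z.2.1) ((d : ℝ) - 2) * J (z.2.1 - z.2.2) ((d : ℝ) - 2) *
        J (z.2.2 - z.1) ((d : ℝ) - 2) * J (x - z.1) ((d : ℝ) - 2) *
        J (y - z.2.1) ((d : ℝ) - 2) := by
    intro z
    rw [ENNReal.ofReal_mul (mul_nonneg (mul_nonneg (mul_nonneg (ipow_nonneg _ _)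
        (ipow_nonneg _ _)) (ipow_nonneg _ _)) (ipow_nonneg _ _)),
      ENNReal.ofReal_mul (mul_nonneg (mul_nonneg (ipow_nonneg _ _) (ipow_nonneg _ _))
        (ipow_nonneg _ _)),
      ENNReal.ofReal_mul (mul_nonneg (ipow_nonneg _ _) (ipow_nonneg _ _)),
      ENNReal.ofReal_mul (ipow_nonneg _ _)]
    rfl
  -- the ENNReal estimate
  have inner3 : ∀ z₁ z₂ : Fin d → ℤ,
      ∑' z₃ : Fin d → ℤ, (J (z₁ - z₂) ((d : ℝ) - 2) * J (z₂ - z₃) ((d : ℝ) - 2) *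
          J (z₃ - z₁) ((d : ℝ) - 2) * J (x - z₁) ((d : ℝ) - 2) * J (y - z₂) ((d : ℝ) - 2)) ≤
        J (x - z₁) ((d : ℝ) - 2) * J (y - z₂) ((d : ℝ) - 2) * K₁ *
          J (z₁ - z₂) (2*(d:ℝ) - 6) := by
    intro z₁ z₂
    calc ∑' z₃ : Fin d → ℤ, (J (z₁ - z₂) ((d : ℝ) - 2) * J (z₂ - z₃) ((d : ℝ) - 2) *
          J (z₃ - z₁) ((d : ℝ) - 2) * J (x - z₁) ((d : ℝ) - 2) * J (y - z₂) ((d : ℝ) - 2))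
        = (J (z₁ - z₂) ((d : ℝ) - 2) * J (x - z₁) ((d : ℝ) - 2) * J (y - z₂) ((d : ℝ) - 2)) *
            ∑' z₃ : Fin d → ℤ, (J (z₃ - z₂) ((d : ℝ) - 2) * J (z₃ - z₁) ((d : ℝ) - 2)) := by
          rw [← ENNReal.tsum_mul_left]
          refine tsum_congr fun z₃ => ?_
          rw [J_swap z₂ z₃]
          ring
      _ ≤ (J (z₁ - z₂) ((d : ℝ) - 2) * J (x - z₁) ((d : ℝ) - 2) * J (y - z₂) ((d : ℝ) - 2)) *
            (K₁ * J (z₂ - z₁) ((d : ℝ) - 4)) := mul_le_mul_right (H₁ z₂ z₁) _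
      _ = J (x - z₁) ((d : ℝ) - 2) * J (y - z₂) ((d : ℝ) - 2) * K₁ *
            (J (z₁ - z₂) ((d : ℝ) - 2) * J (z₁ - z₂) ((d : ℝ) - 4)) := by
          rw [J_swap z₂ z₁]
          ring
      _ = J (x - z₁) ((d : ℝ) - 2) * J (y - z₂) ((d : ℝ) - 2) * K₁ *
            J (z₁ - z₂) (2*(d:ℝ) - 6) := by
          rw [J_mul_J, show ((d : ℝ) - 2) + ((d : ℝ) - 4) = 2*(d:ℝ) - 6 by ring]
  have inner2 : ∀ z₁ : Fin d → ℤ,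
      ∑' z₂ : Fin d → ℤ, (J (x - z₁) ((d : ℝ) - 2) * J (y - z₂) ((d : ℝ) - 2) * K₁ *
          J (z₁ - z₂) (2*(d:ℝ) - 6)) ≤
        J (x - z₁) ((d : ℝ) - 2) * K₁ * (K₂ * J (z₁ - y) ((d : ℝ) - 2)) := by
    intro z₁
    calc ∑' z₂ : Fin d → ℤ, (J (x - z₁) ((d : ℝ) - 2) * J (y - z₂) ((d : ℝ) - 2) * K₁ *
          J (z₁ - z₂) (2*(d:ℝ) - 6))
        = (J (x - z₁) ((d : ℝ) - 2) * K₁) *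
            ∑' z₂ : Fin d → ℤ, (J (z₂ - z₁) (2*(d:ℝ) - 6) * J (z₂ - y) ((d : ℝ) - 2)) := by
          rw [← ENNReal.tsum_mul_left]
          refine tsum_congr fun z₂ => ?_
          rw [J_swap z₁ z₂, J_swap y z₂]
          ring
      _ ≤ (J (x - z₁) ((d : ℝ) - 2) * K₁) * (K₂ * J (z₁ - y) ((d : ℝ) - 2)) :=
          mul_le_mul_right (H₂ z₁ y) _
  have keyE : ∑' z : (Fin d → ℤ) × (Fin d → ℤ) × (Fin d → ℤ),
      (J (z.1 - z.2.1) ((d : ℝ) - 2) * J (z.2.1 - z.2.2) ((d : ℝ) - 2) *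
        J (z.2.2 - z.1) ((d : ℝ) - 2) * J (x - z.1) ((d : ℝ) - 2) *
        J (y - z.2.1) ((d : ℝ) - 2)) ≤ Ktot * J (x - y) ((d : ℝ) - 4) := by
    calc ∑' z : (Fin d → ℤ) × (Fin d → ℤ) × (Fin d → ℤ),
        (J (z.1 - z.2.1) ((d : ℝ) - 2) * J (z.2.1 - z.2.2) ((d : ℝ) - 2) *
          J (z.2.2 - z.1) ((d : ℝ) - 2) * J (x - z.1) ((d : ℝ) - 2) *
          J (y - z.2.1) ((d : ℝ) - 2))
        = ∑' z₁ : Fin d → ℤ, ∑' z₂ : Fin d → ℤ, ∑' z₃ : Fin d → ℤ,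
            (J (z₁ - z₂) ((d : ℝ) - 2) * J (z₂ - z₃) ((d : ℝ) - 2) *
              J (z₃ - z₁) ((d : ℝ) - 2) * J (x - z₁) ((d : ℝ) - 2) *
              J (y - z₂) ((d : ℝ) - 2)) := by
          rw [ENNReal.tsum_prod']
          exact tsum_congr fun z₁ => ENNReal.tsum_prod'
      _ ≤ ∑' z₁ : Fin d → ℤ, ∑' z₂ : Fin d → ℤ,
            (J (x - z₁) ((d : ℝ) - 2) * J (y - z₂) ((d : ℝ) - 2) * K₁ *
              J (z₁ - z₂) (2*(d:ℝ) - 6)) :=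
          ENNReal.tsum_le_tsum fun z₁ => ENNReal.tsum_le_tsum fun z₂ => inner3 z₁ z₂
      _ ≤ ∑' z₁ : Fin d → ℤ,
            (J (x - z₁) ((d : ℝ) - 2) * K₁ * (K₂ * J (z₁ - y) ((d : ℝ) - 2))) :=
          ENNReal.tsum_le_tsum fun z₁ => inner2 z₁
      _ = (K₁ * K₂) * ∑' z₁ : Fin d → ℤ,
            (J (z₁ - x) ((d : ℝ) - 2) * J (z₁ - y) ((d : ℝ) - 2)) := by
          rw [← ENNReal.tsum_mul_left]
          refine tsum_congr fun z₁ => ?_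
          rw [J_swap x z₁]
          ring
      _ ≤ (K₁ * K₂) * (K₁ * J (x - y) ((d : ℝ) - 4)) := mul_le_mul_right (H₁ x y) _
      _ = Ktot * J (x - y) ((d : ℝ) - 4) := by rw [hKtot]; ring
  have keyR : (∑' z : (Fin d → ℤ) × (Fin d → ℤ) × (Fin d → ℤ),
      ipow (z.1 - z.2.1) ((d : ℝ) - 2) * ipow (z.2.1 - z.2.2) ((d : ℝ) - 2) *
        ipow (z.2.2 - z.1) ((d : ℝ) - 2) * ipow (x - z.1) ((d : ℝ) - 2) *
        ipow (y - z.2.1) ((d : ℝ) - 2)) ≤ (Ktot * J (x - y) ((d : ℝ) - 4)).toReal := by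
    refine real_tsum_le _ hnn (ENNReal.mul_ne_top hKtotTop (J_ne_top _ _)) ?_
    calc ∑' z : (Fin d → ℤ) × (Fin d → ℤ) × (Fin d → ℤ),
        ENNReal.ofReal (ipow (z.1 - z.2.1) ((d : ℝ) - 2) * ipow (z.2.1 - z.2.2) ((d : ℝ) - 2) *
          ipow (z.2.2 - z.1) ((d : ℝ) - 2) * ipow (x - z.1) ((d : ℝ) - 2) *
          ipow (y - z.2.1) ((d : ℝ) - 2))
        = ∑' z : (Fin d → ℤ) × (Fin d → ℤ) × (Fin d → ℤ),
            (J (z.1 - z.2.1) ((d : ℝ) - 2) * J (z.2.1 - z.2.2) ((d : ℝ) - 2) *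
              J (z.2.2 - z.1) ((d : ℝ) - 2) * J (x - z.1) ((d : ℝ) - 2) *
              J (y - z.2.1) ((d : ℝ) - 2)) := tsum_congr hofReal
      _ ≤ Ktot * J (x - y) ((d : ℝ) - 4) := keyE
  calc (∑' z : (Fin d → ℤ) × (Fin d → ℤ) × (Fin d → ℤ),
      ipow (z.1 - z.2.1) ((d : ℝ) - 2) * ipow (z.2.1 - z.2.2) ((d : ℝ) - 2) *
        ipow (z.2.2 - z.1) ((d : ℝ) - 2) * ipow (x - z.1) ((d : ℝ) - 2) *
        ipow (y - z.2.1) ((d : ℝ) - 2))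
      ≤ (Ktot * J (x - y) ((d : ℝ) - 4)).toReal := keyR
    _ = Ktot.toReal * ipow (x - y) ((d : ℝ) - 4) := by
        rw [ENNReal.toReal_mul, J_toReal]
    _ ≤ (Ktot.toReal + 1) * ipow (x - y) ((d : ℝ) - 4) :=
        mul_le_mul_of_nonneg_right (by linarith) (ipow_nonneg _ _)
end
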